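/- arXiv:0802.1425 — 6 statements merged into one kernel-verified Lean document; each statement's English description precedes it below -/
import Mathlib

section
/- Let M be a set of unit vectors in ℝ^N (N > 1) such that |(a,b)| ∈ {0, 1/√N} for all distinct a, b ∈ M. Then |M| ≤ N(N+2)/2. -/
open scoped RealInnerProductSpace
open Finset

section Aux

lemma min_eq_half' (a b : ℝ) : min a b = (a + b - |a - b|)/2 := by
  rcases le_total a b with h | h
  · rw [min_eq_left h, abs_of_nonpos (by linarith)]; ring
  · rw [min_eq_right h, abs_of_nonneg (by linarith)]; ring

/-- A subspace of `ι → ℝ` closed under taking absolute values, all of whose nonzero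
elements have support of size at least `N` contained in `A`, has dimension at most
`|A| / N`. -/
lemma lattice_dim_bound' {ι : Type*} [Fintype ι] [DecidableEq ι] (N : ℕ) :
    ∀ (k : ℕ) (A : Finset ι) (K : Submodule ℝ (ι → ℝ)),
    Module.finrank ℝ K = k →
    (∀ v ∈ K, (fun i => |v i|) ∈ K) →
    (∀ v ∈ K, v ≠ 0 → (univ.filter (fun i => v i ≠ 0)) ⊆ A ∧
        N ≤ (univ.filter (fun i => v i ≠ 0)).card) →
    N * k ≤ A.card := by
  intro k
  induction k with
  | zero => intro A K _ _ _; simp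
  | succ k ih =>
    intro A K hrk habs hsupp
    classical
    have hKnt : ∃ v ∈ K, v ≠ (0 : ι → ℝ) := by
      by_contra h
      push_neg at h
      have : K = ⊥ := by
        ext x; simp only [Submodule.mem_bot]
        exact ⟨fun hx => h x hx, fun hx => hx ▸ K.zero_mem⟩
      rw [this] at hrk; simp at hrk
    have hP : ∃ n, ∃ v ∈ K, v ≠ (0 : ι → ℝ) ∧ (univ.filter (fun i => v i ≠ 0)).card = n := by
      obtain ⟨v, hv, hv0⟩ := hKnt; exact ⟨_, v, hv, hv0, rfl⟩
    set n₀ := Nat.find hP with hn₀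
    obtain ⟨v₀, hv₀K, hv₀0, hv₀card⟩ := Nat.find_spec hP
    have hmin : ∀ w ∈ K, w ≠ 0 → n₀ ≤ (univ.filter (fun i => w i ≠ 0)).card := by
      intro w hw hw0
      by_contra h
      exact Nat.find_min hP (lt_of_not_ge h) ⟨w, hw, hw0, rfl⟩
    obtain ⟨a₀, ha₀⟩ : ∃ i, v₀ i ≠ 0 := Function.ne_iff.mp hv₀0
    set K' := K ⊓ LinearMap.ker (LinearMap.proj a₀ : (ι → ℝ) →ₗ[ℝ] ℝ) with hK'
    have hrk' : Module.finrank ℝ K' = k := by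
      have hlt : K' < K := by
        refine lt_of_le_of_ne inf_le_left (fun h => ?_)
        have : v₀ ∈ K' := h ▸ hv₀K
        exact ha₀ (by simpa using this.2)
      have h1 : Module.finrank ℝ K' < k + 1 := hrk ▸ Submodule.finrank_lt_finrank_of_lt hlt
      have h2 : K ≤ K' ⊔ Submodule.span ℝ {v₀} := by
        intro w hw
        have hmem : w - (w a₀ / v₀ a₀) • v₀ ∈ K' := by
          refine ⟨K.sub_mem hw (K.smul_mem _ hv₀K), ?_⟩
          simp [LinearMap.mem_ker, div_mul_cancel₀, ha₀]
        have : w = (w - (w a₀ / v₀ a₀) • v₀) + (w a₀ / v₀ a₀) • v₀ := by ring_nf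
        rw [this]
        exact Submodule.add_mem _ (Submodule.mem_sup_left hmem)
          (Submodule.mem_sup_right (Submodule.smul_mem _ _ (Submodule.mem_span_singleton_self v₀)))
      have h3 : k + 1 ≤ Module.finrank ℝ K' + 1 := by
        calc k + 1 = Module.finrank ℝ K := hrk.symm
        _ ≤ Module.finrank ℝ (K' ⊔ Submodule.span ℝ {v₀} : Submodule ℝ (ι → ℝ)) :=
            Submodule.finrank_mono h2
        _ ≤ Module.finrank ℝ K' + Module.finrank ℝ (Submodule.span ℝ {v₀}) := by
            have := Submodule.finrank_sup_add_finrank_inf_eq K' (Submodule.span ℝ {v₀})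
            omega
        _ = Module.finrank ℝ K' + 1 := by
            rw [finrank_span_singleton (fun h => ha₀ (by simp [h]))]
      omega
    have hdisj : ∀ w ∈ K', ∀ i, v₀ i ≠ 0 → w i = 0 := by
      intro w hwK'
      have hwK : w ∈ K := hwK'.1
      have hwa₀ : w a₀ = 0 := by simpa using hwK'.2
      set z : ι → ℝ := fun i => min |w i| |v₀ i| with hz
      have hzK : z ∈ K := by
        have h1 : (fun i => |w i|) ∈ K := habs w hwK
        have h2 : (fun i => |v₀ i|) ∈ K := habs v₀ hv₀K
        have h3 : (fun i => |w i| - |v₀ i|) ∈ K := K.sub_mem h1 h2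
        have h4 : (fun i => |(|w i| - |v₀ i|)|) ∈ K := habs _ h3
        have : z = (2⁻¹ : ℝ) • ((fun i => |w i|) + (fun i => |v₀ i|) - fun i => |(|w i| - |v₀ i|)|) := by
          funext i
          simp only [Pi.smul_apply, Pi.sub_apply, Pi.add_apply, smul_eq_mul, hz]
          rw [min_eq_half']; ring
        rw [this]
        exact K.smul_mem _ (K.sub_mem (K.add_mem h1 h2) h4)
      have hz0 : z = 0 := by
        by_contra hzne
        have hcard := hmin z hzK hzne
        have hsub : (univ.filter (fun i => z i ≠ 0)) ⊆ (univ.filter (fun i => v₀ i ≠ 0)).erase a₀ := by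
          intro i hi
          simp only [mem_filter, mem_univ, true_and, hz] at hi
          have hv : v₀ i ≠ 0 := by
            intro h; apply hi; simp [h, min_eq_right (abs_nonneg (w i)), abs_nonneg]
          have hia : i ≠ a₀ := by
            intro h; subst h; apply hi; simp [hwa₀]
          exact mem_erase.mpr ⟨hia, by simp [hv]⟩
        have hlt : ((univ.filter (fun i => v₀ i ≠ 0)).erase a₀).card < n₀ := by
          rw [hn₀, ← hv₀card]
          exact card_erase_lt_of_mem (by simp [ha₀])
        have := card_le_card hsub
        omega
      intro i hv
      have : min |w i| |v₀ i| = 0 := congrFun hz0 i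
      rcases min_eq_iff.mp this with h | h
      · exact abs_eq_zero.mp h.1
      · exact absurd (abs_eq_zero.mp h.1) hv
    set S₀ := univ.filter (fun i => v₀ i ≠ 0) with hS₀
    have habs' : ∀ v ∈ K', (fun i => |v i|) ∈ K' := by
      intro v hv
      refine ⟨habs v hv.1, ?_⟩
      have : v a₀ = 0 := by simpa using hv.2
      simp [LinearMap.mem_ker, this]
    have hsupp' : ∀ v ∈ K', v ≠ 0 → (univ.filter (fun i => v i ≠ 0)) ⊆ A \ S₀ ∧
        N ≤ (univ.filter (fun i => v i ≠ 0)).card := by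
      intro v hv hv0
      obtain ⟨h1, h2⟩ := hsupp v hv.1 hv0
      refine ⟨fun i hi => ?_, h2⟩
      simp only [mem_filter, mem_univ, true_and] at hi
      refine mem_sdiff.mpr ⟨h1 (by simp [hi]), ?_⟩
      simp only [hS₀, mem_filter, mem_univ, true_and]
      intro hvi
      exact hi (hdisj v hv i hvi)
    have hIH := ih (A \ S₀) K' hrk' habs' hsupp'
    have hS₀A : S₀ ⊆ A := (hsupp v₀ hv₀K hv₀0).1
    have hS₀N : N ≤ S₀.card := (hsupp v₀ hv₀K hv₀0).2
    have hcardsd : (A \ S₀).card = A.card - S₀.card := card_sdiff_of_subset hS₀A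
    have hle : S₀.card ≤ A.card := card_le_card hS₀A
    rw [hcardsd] at hIH
    have : N * (k + 1) = N * k + N := by ring
    omega

/-- The submodule of symmetric "matrices" (as functions on pairs). -/
def symSub' (n : ℕ) : Submodule ℝ (Fin n × Fin n → ℝ) where
  carrier := {X | ∀ p : Fin n × Fin n, X p = X (p.2, p.1)}
  add_mem' := by intro a b ha hb p; simp [ha p, hb p]
  zero_mem' := by intro p; simp
  smul_mem' := by intro c a ha p; simp [ha p]

noncomputable def trFun' (n : ℕ) : (Fin n × Fin n → ℝ) →ₗ[ℝ] ℝ :=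
  ∑ i : Fin n, LinearMap.proj (i, i)

lemma trFun'_apply (n : ℕ) (X : Fin n × Fin n → ℝ) :
    trFun' n X = ∑ i : Fin n, X (i, i) := by
  simp [trFun']

lemma card_le_pairs' (n : ℕ) :
    2 * (univ.filter (fun p : Fin n × Fin n => p.1 ≤ p.2)).card = n * n + n := by
  set A := univ.filter (fun p : Fin n × Fin n => p.1 ≤ p.2) with hA
  set B := univ.filter (fun p : Fin n × Fin n => p.2 ≤ p.1) with hB
  have hAB : A.card = B.card := by
    apply Finset.card_nbij' (fun p => (p.2, p.1)) (fun p => (p.2, p.1)) <;>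
      intro p hp <;> simp only [hA, hB, Finset.mem_coe, mem_filter, mem_univ, true_and] at * <;>
      first | exact hp | rfl
  have hunion : A ∪ B = univ := by
    ext p; simp only [mem_union, hA, hB, mem_filter, mem_univ, true_and, iff_true]
    exact le_total p.1 p.2
  have hinter : A ∩ B = univ.filter (fun p : Fin n × Fin n => p.1 = p.2) := by
    ext p
    simp only [mem_inter, hA, hB, mem_filter, mem_univ, true_and]
    constructor
    · rintro ⟨h1, h2⟩; exact le_antisymm h1 h2
    · rintro h; rw [h]; exact ⟨le_rfl, le_rfl⟩
  have hdiag : (univ.filter (fun p : Fin n × Fin n => p.1 = p.2)).card = n := by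
    have : univ.filter (fun p : Fin n × Fin n => p.1 = p.2) = univ.image (fun i : Fin n => (i, i)) := by
      ext p
      simp only [mem_filter, mem_univ, true_and, mem_image]
      constructor
      · intro h
        refine ⟨p.1, ?_⟩
        exact Prod.ext rfl h
      · rintro ⟨i, _, rfl⟩; rfl
    rw [this, Finset.card_image_of_injective _ (fun a b h => by simpa using (Prod.mk.injEq _ _ _ _ ▸ h).1)]
    simp
  have h := Finset.card_union_add_card_inter A B
  rw [hunion, hinter, hdiag] at h
  have : (univ : Finset (Fin n × Fin n)).card = n * n := by simp
  omega

lemma finrank_symSub' (n : ℕ) :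
    2 * Module.finrank ℝ (symSub' n) ≤ n * n + n := by
  classical
  set T := {p : Fin n × Fin n // p.1 ≤ p.2}
  let f : (symSub' n) →ₗ[ℝ] (T → ℝ) :=
    (LinearMap.funLeft ℝ ℝ Subtype.val).comp (symSub' n).subtype
  have hinj : Function.Injective f := by
    rw [← LinearMap.ker_eq_bot]
    ext X
    simp only [LinearMap.mem_ker, Submodule.mem_bot]
    constructor
    · intro hX
      apply Subtype.ext
      funext p
      rcases le_total p.1 p.2 with h | h
      · have := congrFun hX ⟨p, h⟩
        simpa [f, LinearMap.funLeft] using this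
      · have h2 := X.2 p
        have := congrFun hX ⟨(p.2, p.1), h⟩
        simp only [f, LinearMap.funLeft] at this
        simp only [Pi.zero_apply] at this ⊢
        rw [h2]
        exact this
    · intro h; rw [h]; simp
  have hle : Module.finrank ℝ (symSub' n) ≤ Module.finrank ℝ (T → ℝ) :=
    LinearMap.finrank_le_finrank_of_injective hinj
  have hT : Module.finrank ℝ (T → ℝ) = Fintype.card T := by
    simp [Module.finrank_pi]
  have hcard : Fintype.card T = (univ.filter (fun p : Fin n × Fin n => p.1 ≤ p.2)).card :=
    Fintype.card_subtype _
  have := card_le_pairs' n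
  omega

lemma finrank_symTraceless' (n : ℕ) (hn : 0 < n) :
    2 * Module.finrank ℝ (symSub' n ⊓ LinearMap.ker (trFun' n) : Submodule ℝ (Fin n × Fin n → ℝ)) + 2 ≤ n * n + n := by
  have hlt : (symSub' n ⊓ LinearMap.ker (trFun' n) : Submodule ℝ (Fin n × Fin n → ℝ)) < symSub' n := by
    refine lt_of_le_of_ne inf_le_left (fun h => ?_)
    set X₀ : Fin n × Fin n → ℝ := fun p => if p.1 = p.2 then 1 else 0 with hX₀
    have hX₀sym : X₀ ∈ symSub' n := by
      intro p; simp only [hX₀]; congr 1; simp [eq_comm]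
    have hX₀tr : trFun' n X₀ = n := by
      rw [trFun'_apply]; simp [hX₀]
    have : X₀ ∈ (symSub' n ⊓ LinearMap.ker (trFun' n) : Submodule ℝ (Fin n × Fin n → ℝ)) := by
      rw [h]; exact hX₀sym
    have h0 : (n : ℝ) = 0 := by rw [← hX₀tr]; exact this.2
    exact_mod_cast absurd h0 (by positivity)
  have h1 : Module.finrank ℝ (symSub' n ⊓ LinearMap.ker (trFun' n) : Submodule ℝ (Fin n × Fin n → ℝ)) <
      Module.finrank ℝ (symSub' n) := Submodule.finrank_lt_finrank_of_lt hlt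
  have h2 := finrank_symSub' n
  omega

end Aux

set_option maxHeartbeats 1000000 in
/-- A set of unit vectors in ℝ^N (N > 1) with pairwise absolute inner
products in {0, 1/√N} has at most N(N+2)/2 elements. -/
theorem stmt_2 (N : ℕ) (hN : 1 < N) (M : Finset (EuclideanSpace ℝ (Fin N)))
    (hunit : ∀ a ∈ M, ‖a‖ = 1)
    (hang : ∀ a ∈ M, ∀ b ∈ M, a ≠ b →
      |⟪a, b⟫| = 0 ∨ |⟪a, b⟫| = 1 / Real.sqrt N) :
    (M.card : ℝ) ≤ N * (N + 2) / 2 := by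
  classical
  have hN0 : (0:ℝ) < N := by positivity
  have hNne : (N:ℝ) ≠ 0 := ne_of_gt hN0
  have hip : ∀ a b : EuclideanSpace ℝ (Fin N), ⟪a, b⟫ = ∑ i, a i * b i := by
    intro a b
    simp [PiLp.inner_apply, RCLike.inner_apply, mul_comm]
  have hα : ∀ a ∈ M, ∑ i, a i * a i = 1 := by
    intro a ha
    have h := real_inner_self_eq_norm_sq a
    rw [hunit a ha] at h
    rw [hip] at h
    linarith
  -- the rank-one projector-like tensors
  set T : ↥M → (Fin N × Fin N → ℝ) :=
    fun a p => (a : EuclideanSpace ℝ (Fin N)) p.1 * (a : EuclideanSpace ℝ (Fin N)) p.2 -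
      (if p.1 = p.2 then (1:ℝ)/N else 0) with hT
  have hTT : ∀ a b : ↥M, ∑ p : Fin N × Fin N, T a p * T b p
      = (∑ i, (a : EuclideanSpace ℝ (Fin N)) i * (b : EuclideanSpace ℝ (Fin N)) i)^2 - 1/N := by
    intro a b
    set x := (a : EuclideanSpace ℝ (Fin N))
    set y := (b : EuclideanSpace ℝ (Fin N))
    have hx : ∑ i, x i * x i = 1 := hα _ a.2
    have hy : ∑ i, y i * y i = 1 := hα _ b.2
    rw [Fintype.sum_prod_type]
    have key : ∀ i j : Fin N,
        T a (i, j) * T b (i, j)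
        = (x i * y i) * (x j * y j)
          - (if i = j then (1/(N:ℝ)) * (x i * x j) else 0)
          - (if i = j then (1/(N:ℝ)) * (y i * y j) else 0)
          + (if i = j then (1/(N:ℝ))^2 else 0) := by
      intro i j
      simp only [hT]
      by_cases h : i = j <;> simp [h] <;> ring
    simp_rw [key, Finset.sum_add_distrib, Finset.sum_sub_distrib, Finset.sum_ite_eq, mem_univ,
      if_true]
    rw [← Finset.sum_mul_sum]
    rw [← Finset.mul_sum, ← Finset.mul_sum, hx, hy]
    simp only [Finset.sum_const, card_univ, Fintype.card_fin, nsmul_eq_mul]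
    field_simp
    ring
  -- the orthogonality indicator
  set cc : ↥M → ↥M → ℝ := fun a b =>
    if a ≠ b ∧ (∑ i, (a : EuclideanSpace ℝ (Fin N)) i * (b : EuclideanSpace ℝ (Fin N)) i) = 0
    then 1 else 0 with hcc
  have hcc0 : ∀ a b, 0 ≤ cc a b := by
    intro a b; simp only [hcc]; split <;> norm_num
  have hg : ∀ a b : ↥M,
      (∑ i, (a : EuclideanSpace ℝ (Fin N)) i * (b : EuclideanSpace ℝ (Fin N)) i)^2 - 1/N
      = (if a = b then ((N:ℝ)-1)/N else 0) - 1/N * cc a b := by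
    intro a b
    by_cases hab : a = b
    · subst hab
      simp only [hcc, if_pos rfl, ne_eq, not_true_eq_false, false_and, if_false, if_true]
      rw [hα _ a.2]
      field_simp
      ring
    · have habv : (a : EuclideanSpace ℝ (Fin N)) ≠ (b : EuclideanSpace ℝ (Fin N)) :=
        fun h => hab (Subtype.ext h)
      have hangab := hang _ a.2 _ b.2 habv
      rw [if_neg hab]
      rcases hangab with h0 | h1
      · have hs : (∑ i, (a : EuclideanSpace ℝ (Fin N)) i * (b : EuclideanSpace ℝ (Fin N)) i) = 0 := by
          rw [← hip]; exact abs_eq_zero.mp h0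
        simp only [hcc, hs, hab, ne_eq, not_false_eq_true, and_self, if_true]
        norm_num
      · have hs : (∑ i, (a : EuclideanSpace ℝ (Fin N)) i * (b : EuclideanSpace ℝ (Fin N)) i)^2 = 1/N := by
          rw [← hip, ← sq_abs, h1]
          rw [div_pow, one_pow, Real.sq_sqrt (le_of_lt hN0)]
        have hsne : (∑ i, (a : EuclideanSpace ℝ (Fin N)) i * (b : EuclideanSpace ℝ (Fin N)) i) ≠ 0 := by
          intro h
          rw [← hip] at h
          rw [h] at h1
          simp only [abs_zero] at h1
          have : Real.sqrt N > 0 := Real.sqrt_pos.mpr hN0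
          rw [eq_comm, div_eq_zero_iff] at h1
          rcases h1 with h1 | h1
          · exact one_ne_zero h1
          · exact ne_of_gt this h1
        simp only [hcc, hsne, and_false, if_false]
        rw [hs]
        ring
  -- the linear map
  set φ : (↥M → ℝ) →ₗ[ℝ] (Fin N × Fin N → ℝ) :=
    ∑ a : ↥M, (LinearMap.proj a : (↥M → ℝ) →ₗ[ℝ] ℝ).smulRight (T a) with hφdef
  have hφ : ∀ (v : ↥M → ℝ) (p : Fin N × Fin N), φ v p = ∑ a : ↥M, v a * T a p := by
    intro v p
    simp [hφdef, LinearMap.sum_apply, LinearMap.smulRight_apply, Finset.sum_apply]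
  -- expansion of pairing with T a
  have hexp : ∀ (v : ↥M → ℝ) (a : ↥M),
      ∑ p : Fin N × Fin N, T a p * φ v p
      = ((N:ℝ)-1)/N * v a - 1/N * ∑ b : ↥M, cc a b * v b := by
    intro v a
    have step1 : ∑ p : Fin N × Fin N, T a p * φ v p
        = ∑ b : ↥M, v b * ∑ p : Fin N × Fin N, T a p * T b p := by
      simp_rw [hφ, Finset.mul_sum]
      rw [Finset.sum_comm]
      apply Finset.sum_congr rfl
      intro b _
      apply Finset.sum_congr rfl
      intro p _
      ring
    rw [step1]
    simp_rw [hTT, hg, mul_sub]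
    rw [Finset.sum_sub_distrib]
    congr 1
    · simp_rw [mul_ite, mul_zero]
      rw [Finset.sum_ite_eq univ a (fun b => v b * (((N:ℝ)-1)/N))]
      simp [mul_comm]
    · rw [Finset.mul_sum]
      apply Finset.sum_congr rfl
      intro b _
      ring
  -- quadratic form identities
  set Qf : (↥M → ℝ) → ℝ := fun v => ∑ a : ↥M, ∑ b : ↥M, cc a b * (v a * v b) with hQf
  set Af : (↥M → ℝ) → ℝ := fun v => ∑ a : ↥M, (v a)^2 with hAf
  have hNS : ∀ v : ↥M → ℝ,
      (N:ℝ) * ∑ p : Fin N × Fin N, (φ v p)^2 = ((N:ℝ)-1) * Af v - Qf v := by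
    intro v
    have step : ∑ p : Fin N × Fin N, (φ v p)^2
        = ∑ a : ↥M, v a * ∑ p : Fin N × Fin N, T a p * φ v p := by
      have e : ∀ p : Fin N × Fin N, (φ v p)^2 = ∑ a : ↥M, v a * T a p * φ v p := by
        intro p
        rw [pow_two]
        nth_rewrite 1 [hφ v p]
        rw [Finset.sum_mul]
      simp_rw [e]
      rw [Finset.sum_comm]
      apply Finset.sum_congr rfl
      intro a _
      rw [Finset.mul_sum]
      apply Finset.sum_congr rfl
      intro p _
      ring
    rw [step]
    simp_rw [hexp, mul_sub]
    rw [Finset.sum_sub_distrib]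
    have e1 : ∑ a : ↥M, v a * (((N:ℝ)-1)/N * v a) = ((N:ℝ)-1)/N * Af v := by
      rw [hAf, Finset.mul_sum]
      apply Finset.sum_congr rfl
      intro a _; ring
    have e2 : ∑ a : ↥M, v a * (1/(N:ℝ) * ∑ b : ↥M, cc a b * v b) = 1/N * Qf v := by
      rw [hQf, Finset.mul_sum]
      apply Finset.sum_congr rfl
      intro a _
      rw [Finset.mul_sum, Finset.mul_sum, Finset.mul_sum]
      apply Finset.sum_congr rfl
      intro b _
      ring
    rw [e1, e2]
    field_simp
  have hSnn : ∀ v : ↥M → ℝ, 0 ≤ ∑ p : Fin N × Fin N, (φ v p)^2 := by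
    intro v
    exact Finset.sum_nonneg (fun p _ => sq_nonneg _)
  have hzero : ∀ v : ↥M → ℝ, (∑ p : Fin N × Fin N, (φ v p)^2 = 0) → φ v = 0 := by
    intro v h
    funext p
    have := (Finset.sum_eq_zero_iff_of_nonneg (fun p _ => sq_nonneg (φ v p))).mp h p (mem_univ p)
    exact pow_eq_zero_iff (by norm_num) |>.mp this
  -- closure of the kernel under absolute values
  have habsK : ∀ v ∈ LinearMap.ker φ, (fun a => |v a|) ∈ LinearMap.ker φ := by
    intro v hv
    rw [LinearMap.mem_ker] at hv ⊢
    have hvS : ∑ p : Fin N × Fin N, (φ v p)^2 = 0 := by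
      rw [hv]; simp
    have hQv : ((N:ℝ)-1) * Af v - Qf v = 0 := by
      rw [← hNS, hvS, mul_zero]
    set u : ↥M → ℝ := fun a => |v a| with hu
    have hAu : Af u = Af v := by
      rw [hAf]
      apply Finset.sum_congr rfl
      intro a _
      simp [hu, sq_abs]
    have hQuv : Qf v ≤ Qf u := by
      rw [hQf]
      apply Finset.sum_le_sum
      intro a _
      apply Finset.sum_le_sum
      intro b _
      apply mul_le_mul_of_nonneg_left _ (hcc0 a b)
      calc v a * v b ≤ |v a * v b| := le_abs_self _
      _ = u a * u b := by rw [hu]; simp [abs_mul]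
    have hQu : ((N:ℝ)-1) * Af u - Qf u ≤ 0 := by
      rw [hAu]; linarith
    have h1 : (N:ℝ) * ∑ p : Fin N × Fin N, (φ u p)^2 ≤ 0 := by
      rw [hNS]; exact hQu
    have h2 : ∑ p : Fin N × Fin N, (φ u p)^2 ≤ 0 := by
      by_contra h
      push_neg at h
      nlinarith
    exact hzero u (le_antisymm h2 (hSnn u))
  -- support bound
  have hsuppK : ∀ v ∈ LinearMap.ker φ, v ≠ 0 →
      (univ.filter (fun a : ↥M => v a ≠ 0)) ⊆ (univ : Finset ↥M) ∧
      N ≤ (univ.filter (fun a : ↥M => v a ≠ 0)).card := by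
    intro v hv hv0
    refine ⟨subset_univ _, ?_⟩
    set u : ↥M → ℝ := fun a => |v a| with hu
    have huK : φ u = 0 := by
      have := habsK v hv
      rwa [LinearMap.mem_ker] at this
    have heq : ∀ a : ↥M, ((N:ℝ)-1) * u a = ∑ b : ↥M, cc a b * u b := by
      intro a
      have h0 : ∑ p : Fin N × Fin N, T a p * φ u p = 0 := by
        rw [huK]; simp
      rw [hexp u a] at h0
      have h1 : (N:ℝ) * (((N:ℝ)-1)/N * u a - 1/N * ∑ b : ↥M, cc a b * u b) = 0 := by
        rw [h0, mul_zero]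
      have h2 : (N:ℝ) * (((N:ℝ)-1)/N * u a) = ((N:ℝ)-1) * u a := by
        field_simp
      have h3 : (N:ℝ) * (1/N * ∑ b : ↥M, cc a b * u b) = ∑ b : ↥M, cc a b * u b := by
        field_simp
      rw [mul_sub, h2, h3] at h1
      linarith
    obtain ⟨i₀, hi₀⟩ : ∃ i, v i ≠ 0 := Function.ne_iff.mp hv0
    have hne : (univ : Finset ↥M).Nonempty := ⟨i₀, mem_univ _⟩
    obtain ⟨amax, _, hamax⟩ := Finset.exists_max_image univ u hne
    have humax : 0 < u amax := by
      have h1 : 0 < u i₀ := by simp [hu, abs_pos, hi₀]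
      exact lt_of_lt_of_le h1 (hamax i₀ (mem_univ _))
    set Sf := univ.filter (fun b : ↥M => cc amax b ≠ 0 ∧ u b ≠ 0) with hSf
    have hsum : ∑ b : ↥M, cc amax b * u b = ∑ b ∈ Sf, cc amax b * u b := by
      rw [hSf]
      rw [Finset.sum_filter_of_ne]
      intro b _ hb
      constructor
      · intro h; apply hb; rw [h, zero_mul]
      · intro h; apply hb; rw [h, mul_zero]
    have hbound : ∑ b ∈ Sf, cc amax b * u b ≤ Sf.card * u amax := by
      calc ∑ b ∈ Sf, cc amax b * u b ≤ ∑ b ∈ Sf, u amax := by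
            apply Finset.sum_le_sum
            intro b hb
            simp only [hSf, mem_filter, mem_univ, true_and] at hb
            have hcb : cc amax b = 1 := by
              simp only [hcc] at hb ⊢
              by_cases h : amax ≠ b ∧ (∑ i, ((amax : EuclideanSpace ℝ (Fin N)) i * (b : EuclideanSpace ℝ (Fin N)) i)) = 0
              · rw [if_pos h]
              · exact absurd (if_neg h) hb.1
            rw [hcb, one_mul]
            exact hamax b (mem_univ _)
      _ = Sf.card * u amax := by rw [Finset.sum_const, nsmul_eq_mul]
    have hNcard : ((N:ℝ)-1) ≤ (Sf.card : ℝ) := by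
      have h := heq amax
      rw [hsum] at h
      have : ((N:ℝ)-1) * u amax ≤ (Sf.card : ℝ) * u amax := le_trans (le_of_eq h) hbound
      exact le_of_mul_le_mul_right this humax
    have hNScard : N ≤ Sf.card + 1 := by
      have : ((N:ℝ)) ≤ (Sf.card : ℝ) + 1 := by linarith
      exact_mod_cast this
    have hsub : Sf ⊆ (univ.filter (fun a : ↥M => v a ≠ 0)).erase amax := by
      intro b hb
      simp only [hSf, mem_filter, mem_univ, true_and] at hb
      have hb2 : v b ≠ 0 := by
        intro h; apply hb.2; simp [hu, h]
      have hb1 : b ≠ amax := by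
        intro h
        apply hb.1
        simp only [hcc, h]
        rw [if_neg]
        intro hcon
        exact hcon.1 rfl
      exact mem_erase.mpr ⟨hb1, by simp [hb2]⟩
    have hamem : amax ∈ univ.filter (fun a : ↥M => v a ≠ 0) := by
      have : v amax ≠ 0 := by
        intro h
        rw [hu] at humax
        simp only [h, abs_zero] at humax
        exact lt_irrefl 0 humax
      simp [this]
    have h1 := card_le_card hsub
    have h2 := card_erase_of_mem hamem
    have h3 : 1 ≤ (univ.filter (fun a : ↥M => v a ≠ 0)).card := card_pos.mpr ⟨amax, hamem⟩
    omega
  -- range is contained in the traceless symmetric subspace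
  have hrange : LinearMap.range φ ≤ (symSub' N ⊓ LinearMap.ker (trFun' N) : Submodule ℝ (Fin N × Fin N → ℝ)) := by
    rintro x ⟨v, rfl⟩
    have hTmem : ∀ a : ↥M, T a ∈ (symSub' N ⊓ LinearMap.ker (trFun' N) : Submodule ℝ (Fin N × Fin N → ℝ)) := by
      intro a
      rw [Submodule.mem_inf]
      constructor
      · intro p
        simp only [hT]
        rw [mul_comm]
        congr 1
        simp [eq_comm]
      · rw [LinearMap.mem_ker, trFun'_apply]
        simp only [hT]
        rw [Finset.sum_sub_distrib]
        rw [hα _ a.2]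
        simp [Finset.sum_const, card_univ, hNne]
    have : φ v = ∑ a : ↥M, v a • T a := by
      funext p
      rw [hφ]
      simp [Finset.sum_apply]
    rw [this]
    exact Submodule.sum_mem _ (fun a _ => Submodule.smul_mem _ _ (hTmem a))
  -- put everything together
  have hdim : Module.finrank ℝ (↥M → ℝ) = M.card := by
    rw [Module.finrank_pi]
    exact Fintype.card_coe M
  have hrn := LinearMap.finrank_range_add_finrank_ker φ
  rw [hdim] at hrn
  have hR : 2 * Module.finrank ℝ (LinearMap.range φ) + 2 ≤ N * N + N := by
    have h1 : Module.finrank ℝ (LinearMap.range φ) ≤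
        Module.finrank ℝ (symSub' N ⊓ LinearMap.ker (trFun' N) : Submodule ℝ (Fin N × Fin N → ℝ)) :=
      Submodule.finrank_mono hrange
    have h2 := finrank_symTraceless' N (by omega)
    omega
  have hK : N * Module.finrank ℝ (LinearMap.ker φ) ≤ M.card := by
    have := lattice_dim_bound' N (Module.finrank ℝ (LinearMap.ker φ)) univ (LinearMap.ker φ)
      rfl habsK hsuppK
    simpa [Fintype.card_coe] using this
  -- final arithmetic
  set m := M.card
  set R := Module.finrank ℝ (LinearMap.range φ)
  set k := Module.finrank ℝ (LinearMap.ker φ)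
  have hNR : (1:ℝ) < N := by exact_mod_cast hN
  have hR' : 2*(R:ℝ) + 2 ≤ (N:ℝ)*N + N := by exact_mod_cast hR
  have hK' : (N:ℝ) * k ≤ m := by exact_mod_cast hK
  have hrn' : (R:ℝ) + k = m := by exact_mod_cast hrn
  have e1 : (N:ℝ) * R = N * m - N * k := by
    rw [← hrn']; ring
  have h1 : (m:ℝ) * ((N:ℝ)-1) ≤ (N:ℝ) * R := by
    rw [e1]; nlinarith
  have h2b : (N:ℝ) * (2*R) ≤ (N:ℝ) * ((N:ℝ)*N + N - 2) :=
    mul_le_mul_of_nonneg_left (by linarith) (by positivity)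
  have hring : (N:ℝ)*((N:ℝ)*N+N-2) = ((N:ℝ)*((N:ℝ)+2))*((N:ℝ)-1) := by ring
  have h3 : (2*(m:ℝ)) * ((N:ℝ)-1) ≤ ((N:ℝ)*((N:ℝ)+2)) * ((N:ℝ)-1) := by
    rw [← hring]; nlinarith
  have h4 : 2*(m:ℝ) ≤ (N:ℝ)*((N:ℝ)+2) := le_of_mul_le_mul_right h3 (by linarith)
  linarith
end

section
/- Let R be a binary symmetric m×m matrix and define T_R : 𝔽₂^m → ℤ₄ by T_R(v) = Σᵢ R_{ii} v̂ᵢ² + 2 Σ_{i<j} R_{ij} v̂ᵢ v̂ⱼ, where v̂ ∈ ℤ₄^m is the 0/1 lift of v. Then T_R(u+v) = T_R(u) + T_R(v) + 2·(û R v̂ᵀ) for all u, v ∈ 𝔽₂^m, where the addition u+v is in 𝔽₂^m. -/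
open Finset

private lemma zmod_diag_id : ∀ c a b : ZMod 2,
    (c.val : ZMod 4) * (((a + b).val : ZMod 4)) ^ 2
      = (c.val : ZMod 4) * ((a.val : ZMod 4)) ^ 2
        + (c.val : ZMod 4) * ((b.val : ZMod 4)) ^ 2
        + 2 * ((a.val : ZMod 4) * (c.val : ZMod 4) * (b.val : ZMod 4)) := by
  decide

private lemma zmod_off_id : ∀ c a b a' b' : ZMod 2,
    2 * ((c.val : ZMod 4) * ((a + b).val : ZMod 4) * ((a' + b').val : ZMod 4))
      = 2 * ((c.val : ZMod 4) * (a.val : ZMod 4) * (a'.val : ZMod 4))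
        + 2 * ((c.val : ZMod 4) * (b.val : ZMod 4) * (b'.val : ZMod 4))
        + 2 * ((a.val : ZMod 4) * (c.val : ZMod 4) * (b'.val : ZMod 4)
             + (a'.val : ZMod 4) * (c.val : ZMod 4) * (b.val : ZMod 4)) := by
  decide

private lemma split_sum {m : ℕ} (f : Fin m → Fin m → ZMod 4) :
    ∑ i, ∑ j, f i j
      = (∑ i, ∑ j, if i < j then f i j + f j i else 0) + ∑ i, f i i := by
  have key : ∀ i j : Fin m, f i j =
      (if i < j then f i j else 0) + (if j < i then f i j else 0)
        + (if i = j then f i j else 0) := by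
    intro i j
    rcases lt_trichotomy i j with h | h | h
    · simp [h, asymm h, h.ne]
    · simp [h, lt_irrefl]
    · simp [h, asymm h, h.ne']
  calc ∑ i, ∑ j, f i j
      = ∑ i, ∑ j, ((if i < j then f i j else 0) + (if j < i then f i j else 0)
          + (if i = j then f i j else 0)) := by
        exact Finset.sum_congr rfl fun i _ => Finset.sum_congr rfl fun j _ => key i j
    _ = (∑ i, ∑ j, if i < j then f i j else 0)
        + (∑ i, ∑ j, if j < i then f i j else 0)
        + (∑ i, ∑ j, if i = j then f i j else 0) := by
        simp [Finset.sum_add_distrib]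
    _ = (∑ i, ∑ j, if i < j then f i j else 0)
        + (∑ i, ∑ j, if i < j then f j i else 0)
        + ∑ i, f i i := by
        congr 1
        · congr 1
          rw [Finset.sum_comm]
        · exact Finset.sum_congr rfl fun i _ => by simp
    _ = (∑ i, ∑ j, if i < j then f i j + f j i else 0) + ∑ i, f i i := by
        congr 1
        rw [← Finset.sum_add_distrib]
        refine Finset.sum_congr rfl fun i _ => ?_
        rw [← Finset.sum_add_distrib]
        refine Finset.sum_congr rfl fun j _ => ?_
        split_ifs <;> simp

/-- For a binary symmetric m×m matrix R, the ℤ₄-valued quadratic form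
T_R(v) = Σᵢ R_{ii} v̂ᵢ² + 2 Σ_{i<j} R_{ij} v̂ᵢ v̂ⱼ satisfies
T_R(u+v) = T_R(u) + T_R(v) + 2·(û R v̂ᵀ). -/
theorem stmt_4 (m : ℕ) (R : Matrix (Fin m) (Fin m) (ZMod 2))
    (hsymm : R.IsSymm)
    (lift : ZMod 2 → ZMod 4) (hlift : ∀ x : ZMod 2, lift x = (x.val : ZMod 4))
    (T : (Fin m → ZMod 2) → ZMod 4)
    (hT : ∀ v, T v = (∑ i, lift (R i i) * (lift (v i)) ^ 2) +
      2 * ∑ i, ∑ j, if i < j then lift (R i j) * lift (v i) * lift (v j) else 0) :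
    ∀ u v : Fin m → ZMod 2,
      T (u + v) = T u + T v + 2 * ∑ i, ∑ j, lift (u i) * lift (R i j) * lift (v j) := by
  intro u v
  simp only [hT, hlift, Pi.add_apply]
  have E1 : ∑ i, ((R i i).val : ZMod 4) * (((u i + v i).val : ZMod 4)) ^ 2
      = (∑ i, ((R i i).val : ZMod 4) * (((u i).val : ZMod 4)) ^ 2)
        + (∑ i, ((R i i).val : ZMod 4) * (((v i).val : ZMod 4)) ^ 2)
        + ∑ i, 2 * (((u i).val : ZMod 4) * ((R i i).val : ZMod 4) * ((v i).val : ZMod 4)) := by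
    rw [← Finset.sum_add_distrib, ← Finset.sum_add_distrib]
    exact Finset.sum_congr rfl fun i _ => zmod_diag_id _ _ _
  have E2 : (∑ i, ∑ j, if i < j then
        2 * (((R i j).val : ZMod 4) * ((u i + v i).val : ZMod 4) * ((u j + v j).val : ZMod 4))
        else 0)
      = (∑ i, ∑ j, if i < j then
          2 * (((R i j).val : ZMod 4) * ((u i).val : ZMod 4) * ((u j).val : ZMod 4)) else 0)
        + (∑ i, ∑ j, if i < j then
          2 * (((R i j).val : ZMod 4) * ((v i).val : ZMod 4) * ((v j).val : ZMod 4)) else 0)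
        + (∑ i, ∑ j, if i < j then
          2 * (((u i).val : ZMod 4) * ((R i j).val : ZMod 4) * ((v j).val : ZMod 4)
             + ((u j).val : ZMod 4) * ((R i j).val : ZMod 4) * ((v i).val : ZMod 4)) else 0) := by
    rw [← Finset.sum_add_distrib, ← Finset.sum_add_distrib]
    refine Finset.sum_congr rfl fun i _ => ?_
    rw [← Finset.sum_add_distrib, ← Finset.sum_add_distrib]
    refine Finset.sum_congr rfl fun j _ => ?_
    split_ifs with h
    · exact zmod_off_id _ _ _ _ _
    · simp
  have E3 := split_sum (m := m)
    (fun i j => ((u i).val : ZMod 4) * ((R i j).val : ZMod 4) * ((v j).val : ZMod 4))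
  have hRsymm : ∀ i j : Fin m, R j i = R i j := fun i j => hsymm.apply i j
  have E3' : (∑ i, ∑ j, ((u i).val : ZMod 4) * ((R i j).val : ZMod 4) * ((v j).val : ZMod 4))
      = (∑ i, ∑ j, if i < j then
          ((u i).val : ZMod 4) * ((R i j).val : ZMod 4) * ((v j).val : ZMod 4)
          + ((u j).val : ZMod 4) * ((R i j).val : ZMod 4) * ((v i).val : ZMod 4) else 0)
        + ∑ i, ((u i).val : ZMod 4) * ((R i i).val : ZMod 4) * ((v i).val : ZMod 4) := by
    rw [E3]
    congr 1
    refine Finset.sum_congr rfl fun i _ => Finset.sum_congr rfl fun j _ => ?_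
    split_ifs with h
    · rw [hRsymm i j]
    · rfl
  have two_sum : ∀ f : Fin m → ZMod 4, 2 * ∑ i, f i = ∑ i, 2 * f i := by
    intro f; rw [Finset.mul_sum]
  have two_ite : ∀ f : Fin m → Fin m → ZMod 4,
      2 * (∑ i, ∑ j, if i < j then f i j else 0)
        = ∑ i, ∑ j, if i < j then 2 * f i j else 0 := by
    intro f
    rw [Finset.mul_sum]
    exact Finset.sum_congr rfl fun i _ => by
      rw [Finset.mul_sum]
      exact Finset.sum_congr rfl fun j _ => by split_ifs <;> simp
  rw [two_ite (fun i j => ((R i j).val : ZMod 4) * ((u i + v i).val : ZMod 4)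
        * ((u j + v j).val : ZMod 4)),
      two_ite (fun i j => ((R i j).val : ZMod 4) * ((u i).val : ZMod 4)
        * ((u j).val : ZMod 4)),
      two_ite (fun i j => ((R i j).val : ZMod 4) * ((v i).val : ZMod 4)
        * ((v j).val : ZMod 4)),
      E1, E2, E3', mul_add,
      two_ite (fun i j => ((u i).val : ZMod 4) * ((R i j).val : ZMod 4) * ((v j).val : ZMod 4)
        + ((u j).val : ZMod 4) * ((R i j).val : ZMod 4) * ((v i).val : ZMod 4)),
      two_sum (fun i => ((u i).val : ZMod 4) * ((R i i).val : ZMod 4) * ((v i).val : ZMod 4))]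
  ring
end

section
/- Let α = (−√N−2)/(N−2), β = (√N−2)/(N−2), γ = −2/(N−2). The 8×8 matrix with rows (1,1,1,1,1,1,1,1), (α,β,γ,α,β,γ,α,β), (α²,β²,γ²,α²,β²,γ²,α²,β²), (α,α,α,β,β,β,γ,γ), (α²,αβ,αγ,αβ,β²,βγ,αγ,βγ), (α³,αβ²,αγ²,α²β,β³,βγ²,α²γ,β²γ), (α²,α²,α²,β²,β²,β²,γ²,γ²), (α³,α²β,α²γ,αβ²,β³,β²γ,αγ²,βγ²) has determinant (α−β)⁶(α−γ)⁴(β−γ)⁴, which is nonzero when N > 4. -/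
open Matrix

@[simp] lemma stmt11_cons_val_five {α : Type*} {m : ℕ} (x : α) (u : Fin (m+5) → α) :
    vecCons x u 5 = vecHead (vecTail (vecTail (vecTail (vecTail u)))) := rfl
@[simp] lemma stmt11_cons_val_six {α : Type*} {m : ℕ} (x : α) (u : Fin (m+6) → α) :
    vecCons x u 6 = vecHead (vecTail (vecTail (vecTail (vecTail (vecTail u))))) := rfl
@[simp] lemma stmt11_cons_val_seven {α : Type*} {m : ℕ} (x : α) (u : Fin (m+7) → α) :
    vecCons x u 7 = vecHead (vecTail (vecTail (vecTail (vecTail (vecTail (vecTail u)))))) := rfl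

noncomputable def stmt11e8 : (Fin 3 ⊕ Fin 3) ⊕ Fin 2 ≃ Fin 8 :=
  (Equiv.sumCongr finSumFinEquiv (Equiv.refl (Fin 2))).trans finSumFinEquiv

noncomputable def stmt11A1 (α β γ : ℝ) : Matrix (Fin 3) (Fin 3) ℝ :=
  !![1,1,1; α,β,γ; α^2,β^2,γ^2]
noncomputable def stmt11A2 (α β γ : ℝ) : Matrix (Fin 3) (Fin 3) ℝ :=
  !![β-α,β-α,β-α; α*(β-α),β*(β-α),γ*(β-α); α^2*(β-α),β^2*(β-α),γ^2*(β-α)]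
noncomputable def stmt11B2 (α β : ℝ) : Matrix (Fin 3) (Fin 2) ℝ := !![1,1; α,β; α^2,β^2]
noncomputable def stmt11B3 (α β γ : ℝ) : Matrix (Fin 3) (Fin 2) ℝ :=
  !![γ-α,γ-α; α*(γ-α),β*(γ-α); α^2*(γ-α),β^2*(γ-α)]
noncomputable def stmt11D2 (α β γ : ℝ) : Matrix (Fin 2) (Fin 2) ℝ :=
  !![(γ-α)*(γ-β),(γ-α)*(γ-β); α*(γ-α)*(γ-β),β*(γ-α)*(γ-β)]

noncomputable def stmt11N (α β γ : ℝ) : Matrix (Fin 8) (Fin 8) ℝ :=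
  Matrix.reindex stmt11e8 stmt11e8
    (fromBlocks (fromBlocks (stmt11A1 α β γ) (stmt11A1 α β γ) 0 (stmt11A2 α β γ))
      (fromRows (stmt11B2 α β) (stmt11B3 α β γ)) 0 (stmt11D2 α β γ))

lemma stmt11N_eq (α β γ : ℝ) :
    stmt11N α β γ = !![1,1,1,1,1,1,1,1;
      α,β,γ,α,β,γ,α,β;
      α^2,β^2,γ^2,α^2,β^2,γ^2,α^2,β^2;
      0,0,0,β-α,β-α,β-α,γ-α,γ-α;
      0,0,0,α*(β-α),β*(β-α),γ*(β-α),α*(γ-α),β*(γ-α);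
      0,0,0,α^2*(β-α),β^2*(β-α),γ^2*(β-α),α^2*(γ-α),β^2*(γ-α);
      0,0,0,0,0,0,(γ-α)*(γ-β),(γ-α)*(γ-β);
      0,0,0,0,0,0,α*(γ-α)*(γ-β),β*(γ-α)*(γ-β)] := by
  ext i j
  fin_cases i <;> fin_cases j <;> rfl

noncomputable def stmt11E (α β : ℝ) : Matrix (Fin 8) (Fin 8) ℝ :=
  !![1,0,0,0,0,0,0,0;
     0,1,0,0,0,0,0,0;
     0,0,1,0,0,0,0,0;
     -α,0,0,1,0,0,0,0;
     0,-α,0,0,1,0,0,0;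
     0,0,-α,0,0,1,0,0;
     α*β,0,0,-(α+β),0,0,1,0;
     0,α*β,0,0,-(α+β),0,0,1]

lemma stmt11_detE (α β : ℝ) : (stmt11E α β).det = 1 := by
  rw [Matrix.det_of_lowerTriangular]
  · norm_num [stmt11E, Fin.prod_univ_succ]
  · intro i j h
    rw [OrderDual.toDual_lt_toDual] at h
    fin_cases i <;> fin_cases j <;> first
      | rfl
      | exact absurd h (by decide)

lemma stmt11_detN (α β γ : ℝ) :
    (stmt11N α β γ).det = (α - β) ^ 6 * (α - γ) ^ 4 * (β - γ) ^ 4 := by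
  rw [stmt11N, Matrix.det_reindex_self]
  simp only [det_fromBlocks_zero₂₁]
  simp [stmt11A1, stmt11A2, stmt11D2, Matrix.det_fin_three, Matrix.det_fin_two]
  ring

set_option maxHeartbeats 4000000 in
lemma stmt11_EM (α β γ : ℝ) :
    stmt11E α β * !![1, 1, 1, 1, 1, 1, 1, 1;
        α, β, γ, α, β, γ, α, β;
        α^2, β^2, γ^2, α^2, β^2, γ^2, α^2, β^2;
        α, α, α, β, β, β, γ, γ;
        α^2, α*β, α*γ, α*β, β^2, β*γ, α*γ, β*γ;
        α^3, α*β^2, α*γ^2, α^2*β, β^3, β*γ^2, α^2*γ, β^2*γ;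
        α^2, α^2, α^2, β^2, β^2, β^2, γ^2, γ^2;
        α^3, α^2*β, α^2*γ, α*β^2, β^3, β^2*γ, α*γ^2, β*γ^2] = stmt11N α β γ := by
  rw [stmt11N_eq]
  ext i j
  fin_cases i <;> fin_cases j <;>
    · norm_num [Matrix.mul_apply, Fin.sum_univ_succ, stmt11E]
      try ring

lemma stmt11_detmul' (n : ℕ) (A B : Matrix (Fin n) (Fin n) ℝ) :
    (A * B).det = A.det * B.det :=
  Matrix.det_mul A B

lemma stmt11_detgen (α β γ : ℝ) :
    (!![1, 1, 1, 1, 1, 1, 1, 1;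
        α, β, γ, α, β, γ, α, β;
        α^2, β^2, γ^2, α^2, β^2, γ^2, α^2, β^2;
        α, α, α, β, β, β, γ, γ;
        α^2, α*β, α*γ, α*β, β^2, β*γ, α*γ, β*γ;
        α^3, α*β^2, α*γ^2, α^2*β, β^3, β*γ^2, α^2*γ, β^2*γ;
        α^2, α^2, α^2, β^2, β^2, β^2, γ^2, γ^2;
        α^3, α^2*β, α^2*γ, α*β^2, β^3, β^2*γ, α*γ^2, β*γ^2] : Matrix (Fin 8) (Fin 8) ℝ).det
      = (α - β) ^ 6 * (α - γ) ^ 4 * (β - γ) ^ 4 := by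
  have h1 := congrArg Matrix.det (stmt11_EM α β γ)
  rw [stmt11_detmul' 8, stmt11_detE, one_mul, stmt11_detN] at h1
  exact h1

/-- With α = (−√N−2)/(N−2), β = (√N−2)/(N−2), γ = −2/(N−2), the given
8×8 matrix has determinant (α−β)⁶(α−γ)⁴(β−γ)⁴, which is nonzero when N > 4. -/
theorem stmt_11 (N : ℝ) (hN : 4 < N)
    (α β γ : ℝ)
    (hα : α = (-Real.sqrt N - 2) / (N - 2))
    (hβ : β = (Real.sqrt N - 2) / (N - 2))
    (hγ : γ = -2 / (N - 2))
    (M : Matrix (Fin 8) (Fin 8) ℝ)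
    (hM : M = !![1, 1, 1, 1, 1, 1, 1, 1;
        α, β, γ, α, β, γ, α, β;
        α^2, β^2, γ^2, α^2, β^2, γ^2, α^2, β^2;
        α, α, α, β, β, β, γ, γ;
        α^2, α*β, α*γ, α*β, β^2, β*γ, α*γ, β*γ;
        α^3, α*β^2, α*γ^2, α^2*β, β^3, β*γ^2, α^2*γ, β^2*γ;
        α^2, α^2, α^2, β^2, β^2, β^2, γ^2, γ^2;
        α^3, α^2*β, α^2*γ, α*β^2, β^3, β^2*γ, α*γ^2, β*γ^2]) :
    M.det = (α - β) ^ 6 * (α - γ) ^ 4 * (β - γ) ^ 4 ∧ M.det ≠ 0 := by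
  have hdet : M.det = (α - β) ^ 6 * (α - γ) ^ 4 * (β - γ) ^ 4 := by
    rw [hM]; exact stmt11_detgen α β γ
  have h2 : N - 2 ≠ 0 := by linarith
  have hs : 0 < Real.sqrt N := Real.sqrt_pos.2 (by linarith)
  have hab : α - β ≠ 0 := by
    rw [hα, hβ, div_sub_div_same]
    exact div_ne_zero (by linarith) h2
  have hac : α - γ ≠ 0 := by
    rw [hα, hγ, div_sub_div_same]
    exact div_ne_zero (by linarith) h2
  have hbc : β - γ ≠ 0 := by
    rw [hβ, hγ, div_sub_div_same]
    exact div_ne_zero (by linarith) h2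
  refine ⟨hdet, ?_⟩
  rw [hdet]
  exact mul_ne_zero (mul_ne_zero (pow_ne_zero _ hab) (pow_ne_zero _ hac)) (pow_ne_zero _ hbc)
end

section
/- Let Y be a binary code of length N−2 (with N = 2^{m+1}, m odd) whose distinct codewords have pairwise Hamming distances only in {2^m − 2^{(m−1)/2}, 2^m, 2^m + 2^{(m−1)/2}}. Then |Y| ≤ N²/4. -/
open Finset

private lemma helperA {α β : Type*} (Y : Finset α) (I : Finset β) (g : α → β → ℤ) :
    ∑ c ∈ Y, ∑ d ∈ Y, ∑ i ∈ I, g c i * g d i = ∑ i ∈ I, (∑ c ∈ Y, g c i) ^ 2 := by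
  calc ∑ c ∈ Y, ∑ d ∈ Y, ∑ i ∈ I, g c i * g d i
      = ∑ c ∈ Y, ∑ i ∈ I, ∑ d ∈ Y, g c i * g d i :=
        Finset.sum_congr rfl fun c _ => Finset.sum_comm
    _ = ∑ i ∈ I, ∑ c ∈ Y, ∑ d ∈ Y, g c i * g d i := Finset.sum_comm
    _ = ∑ i ∈ I, (∑ c ∈ Y, g c i) ^ 2 := by
        refine Finset.sum_congr rfl fun i _ => ?_
        rw [sq, Finset.sum_mul_sum]

private lemma helperC {β : Type*} (I : Finset β) (a : β → ℤ) :
    (∑ i ∈ I, a i) ^ 3 = ∑ i ∈ I, ∑ j ∈ I, ∑ k ∈ I, a i * a j * a k := by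
  rw [pow_succ, sq, Finset.sum_mul_sum, Finset.sum_mul]
  refine Finset.sum_congr rfl fun i _ => ?_
  rw [Finset.sum_mul]
  refine Finset.sum_congr rfl fun j _ => ?_
  rw [Finset.mul_sum]

/-- A binary code of length N−2 (N = 2^{m+1}, m odd) with pairwise distances
in {2^m − 2^{(m−1)/2}, 2^m, 2^m + 2^{(m−1)/2}} has at most N²/4 codewords. -/
theorem stmt_14 (m : ℕ) (hm : Odd m)
    (Y : Finset (Fin (2 ^ (m + 1) - 2) → ZMod 2))
    (hdist : ∀ c ∈ Y, ∀ d ∈ Y, c ≠ d →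
      hammingDist c d ∈
        ({2 ^ m - 2 ^ ((m - 1) / 2), 2 ^ m, 2 ^ m + 2 ^ ((m - 1) / 2)} : Set ℕ)) :
    Y.card ≤ (2 ^ (m + 1)) ^ 2 / 4 := by
  classical
  obtain ⟨t, ht⟩ := hm
  set k : ℕ := (m - 1) / 2 with hk
  have hmk : m = 2 * k + 1 := by omega
  set q : ℤ := 2 ^ k with hq
  have hq0 : (0:ℤ) < q := by positivity
  have hq1 : (1:ℤ) ≤ q := by
    rw [hq]
    calc (1:ℤ) = 2 ^ 0 := rfl
      _ ≤ 2 ^ k := pow_le_pow_right₀ (by norm_num) (Nat.zero_le k)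
  have h2m : (2:ℤ) ^ m = 2 * q ^ 2 := by
    rw [hq, hmk, pow_succ, mul_comm 2 k, pow_mul]; ring
  have hkm : (2:ℕ) ^ k ≤ 2 ^ m := Nat.pow_le_pow_right (by norm_num) (by omega)
  have h2n : (2:ℕ) ≤ 2 ^ (m + 1) := by
    calc (2:ℕ) = 2 ^ 1 := by norm_num
    _ ≤ 2 ^ (m+1) := Nat.pow_le_pow_right (by norm_num) (by omega)
  have hnZ : ((2 ^ (m + 1) - 2 : ℕ) : ℤ) = 4 * q ^ 2 - 2 := by
    push_cast [h2n]
    rw [pow_succ, h2m]; ring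
  set ε : (Fin (2 ^ (m + 1) - 2) → ZMod 2) → Fin (2 ^ (m + 1) - 2) → ℤ :=
    fun c i => if c i = 0 then 1 else -1 with hε
  have hεsq : ∀ c i, ε c i * ε c i = 1 := by
    intro c i; rw [hε]; dsimp only; split <;> norm_num
  set s : (Fin (2 ^ (m + 1) - 2) → ZMod 2) → (Fin (2 ^ (m + 1) - 2) → ZMod 2) → ℤ :=
    fun c d => ∑ i, ε c i * ε d i with hsdef
  have hs_dist : ∀ c d, s c d = ((2 ^ (m + 1) - 2 : ℕ) : ℤ) - 2 * hammingDist c d := by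
    intro c d
    rw [hsdef]; dsimp only
    have h1 : ∀ i, ε c i * ε d i = 1 - 2 * (if c i ≠ d i then 1 else 0) := by
      intro i
      rw [hε]; dsimp only
      rcases (by decide : ∀ a : ZMod 2, a = 0 ∨ a = 1) (c i) with hc | hc <;>
        rcases (by decide : ∀ a : ZMod 2, a = 0 ∨ a = 1) (d i) with hd | hd <;>
          simp [hc, hd]
    simp_rw [h1]
    rw [Finset.sum_sub_distrib, Finset.sum_const, ← Finset.mul_sum, Finset.sum_boole,
      hammingDist]
    simp
  have hs_self : ∀ c, s c c = ((2 ^ (m + 1) - 2 : ℕ) : ℤ) := by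
    intro c
    rw [hsdef]; dsimp only
    simp [hεsq]
  set B : ℤ := (Y.card : ℤ) with hB
  have hB0 : (0:ℤ) ≤ B := by rw [hB]; exact Int.natCast_nonneg _
  set S : Fin (2 ^ (m + 1) - 2) → ℤ := fun i => ∑ c ∈ Y, ε c i with hS
  set M1 : ℤ := ∑ i, (S i) ^ 2 with hM1def
  have hM1 : 0 ≤ M1 := Finset.sum_nonneg fun i _ => sq_nonneg _
  -- first moment
  have hP1 : ∑ c ∈ Y, ∑ d ∈ Y, s c d = M1 := by
    rw [hM1def, hsdef]
    exact helperA Y univ ε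
  -- second moment
  have hP2 : ∑ c ∈ Y, ∑ d ∈ Y, (s c d) ^ 2
      = ∑ i, ∑ j, (∑ c ∈ Y, ε c i * ε c j) ^ 2 := by
    have e1 : ∀ c d, (s c d) ^ 2 = ∑ p ∈ (univ ×ˢ univ :
        Finset (Fin (2 ^ (m + 1) - 2) × Fin (2 ^ (m + 1) - 2))),
        (ε c p.1 * ε c p.2) * (ε d p.1 * ε d p.2) := by
      intro c d
      rw [hsdef]; dsimp only
      rw [sq, Finset.sum_mul_sum, Finset.sum_product]
      exact Finset.sum_congr rfl fun i _ => Finset.sum_congr rfl fun j _ => by ring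
    calc ∑ c ∈ Y, ∑ d ∈ Y, (s c d) ^ 2
        = ∑ c ∈ Y, ∑ d ∈ Y, ∑ p ∈ (univ ×ˢ univ :
            Finset (Fin (2 ^ (m + 1) - 2) × Fin (2 ^ (m + 1) - 2))),
            (ε c p.1 * ε c p.2) * (ε d p.1 * ε d p.2) :=
          Finset.sum_congr rfl fun c _ => Finset.sum_congr rfl fun d _ => e1 c d
      _ = ∑ p ∈ (univ ×ˢ univ : Finset (Fin (2 ^ (m + 1) - 2) × Fin (2 ^ (m + 1) - 2))),
            (∑ c ∈ Y, ε c p.1 * ε c p.2) ^ 2 := helperA Y _ _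
      _ = ∑ i, ∑ j, (∑ c ∈ Y, ε c i * ε c j) ^ 2 := by rw [Finset.sum_product]
  -- third moment
  have hP3 : ∑ c ∈ Y, ∑ d ∈ Y, (s c d) ^ 3
      = ∑ i, ∑ j, ∑ l, (∑ c ∈ Y, ε c i * ε c j * ε c l) ^ 2 := by
    have e1 : ∀ c d, (s c d) ^ 3 = ∑ p ∈ (univ ×ˢ univ ×ˢ univ :
        Finset (Fin (2 ^ (m + 1) - 2) × Fin (2 ^ (m + 1) - 2) × Fin (2 ^ (m + 1) - 2))),
        (ε c p.1 * ε c p.2.1 * ε c p.2.2) * (ε d p.1 * ε d p.2.1 * ε d p.2.2) := by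
      intro c d
      rw [hsdef]; dsimp only
      rw [helperC, Finset.sum_product]
      refine Finset.sum_congr rfl fun i _ => ?_
      rw [Finset.sum_product]
      exact Finset.sum_congr rfl fun j _ => Finset.sum_congr rfl fun l _ => by ring
    calc ∑ c ∈ Y, ∑ d ∈ Y, (s c d) ^ 3
        = ∑ c ∈ Y, ∑ d ∈ Y, ∑ p ∈ (univ ×ˢ univ ×ˢ univ :
            Finset (Fin (2 ^ (m + 1) - 2) × Fin (2 ^ (m + 1) - 2) × Fin (2 ^ (m + 1) - 2))),
            (ε c p.1 * ε c p.2.1 * ε c p.2.2) * (ε d p.1 * ε d p.2.1 * ε d p.2.2) :=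
          Finset.sum_congr rfl fun c _ => Finset.sum_congr rfl fun d _ => e1 c d
      _ = ∑ p ∈ (univ ×ˢ univ ×ˢ univ :
            Finset (Fin (2 ^ (m + 1) - 2) × Fin (2 ^ (m + 1) - 2) × Fin (2 ^ (m + 1) - 2))),
            (∑ c ∈ Y, ε c p.1 * ε c p.2.1 * ε c p.2.2) ^ 2 := helperA Y _ _
      _ = ∑ i, ∑ j, ∑ l, (∑ c ∈ Y, ε c i * ε c j * ε c l) ^ 2 := by
          rw [Finset.sum_product]
          exact Finset.sum_congr rfl fun i _ => by rw [Finset.sum_product]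
  -- positivity bounds
  have hU : ∀ i, (∑ c ∈ Y, ε c i * ε c i) = B := by
    intro i
    rw [hB]
    simp [hεsq]
  have hI2 : ((2 ^ (m + 1) - 2 : ℕ) : ℤ) * B ^ 2 ≤ ∑ c ∈ Y, ∑ d ∈ Y, (s c d) ^ 2 := by
    rw [hP2]
    have h1 : ∀ i, B ^ 2 ≤ ∑ j, (∑ c ∈ Y, ε c i * ε c j) ^ 2 := by
      intro i
      have h2 : (∑ c ∈ Y, ε c i * ε c i) ^ 2 ≤ ∑ j, (∑ c ∈ Y, ε c i * ε c j) ^ 2 := by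
        simpa using Finset.single_le_sum (f := fun j => (∑ c ∈ Y, ε c i * ε c j) ^ 2)
          (fun j _ => sq_nonneg _) (Finset.mem_univ i)
      rwa [hU i] at h2
    calc ((2 ^ (m + 1) - 2 : ℕ) : ℤ) * B ^ 2 = ∑ _i : Fin (2 ^ (m + 1) - 2), B ^ 2 := by
          rw [Finset.sum_const, Finset.card_univ, Fintype.card_fin, nsmul_eq_mul]
      _ ≤ _ := Finset.sum_le_sum fun i _ => h1 i
  have hI3 : ((2 ^ (m + 1) - 2 : ℕ) : ℤ) * M1 ≤ ∑ c ∈ Y, ∑ d ∈ Y, (s c d) ^ 3 := by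
    rw [hP3]
    have h1 : ∀ i, M1 ≤ ∑ j, ∑ l, (∑ c ∈ Y, ε c i * ε c j * ε c l) ^ 2 := by
      intro i
      have hdiagval : M1 = ∑ l, (∑ c ∈ Y, ε c i * ε c i * ε c l) ^ 2 := by
        rw [hM1def]
        refine Finset.sum_congr rfl fun l _ => ?_
        congr 1
        rw [hS]
        exact Finset.sum_congr rfl fun c _ => by rw [hεsq, one_mul]
      rw [hdiagval]
      simpa using Finset.single_le_sum
        (f := fun j => ∑ l, (∑ c ∈ Y, ε c i * ε c j * ε c l) ^ 2)
        (fun j _ => Finset.sum_nonneg fun l _ => sq_nonneg _) (Finset.mem_univ i)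
    calc ((2 ^ (m + 1) - 2 : ℕ) : ℤ) * M1 = ∑ _i : Fin (2 ^ (m + 1) - 2), M1 := by
          rw [Finset.sum_const, Finset.card_univ, Fintype.card_fin, nsmul_eq_mul]
      _ ≤ _ := Finset.sum_le_sum fun i _ => h1 i
  -- the LP polynomial vanishes off the diagonal
  have hzero : ∀ c ∈ Y, ∀ d ∈ Y, d ≠ c →
      (s c d) ^ 3 + 6 * (s c d) ^ 2 + (12 - 4 * q ^ 2) * (s c d) + (8 - 8 * q ^ 2) = 0 := by
    intro c hc d hd hne
    have hw := hdist c hc d hd (Ne.symm hne)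
    simp only [Set.mem_insert_iff, Set.mem_singleton_iff] at hw
    have hcast : (hammingDist c d : ℤ) = 2 * q ^ 2 - q ∨ (hammingDist c d : ℤ) = 2 * q ^ 2 ∨
        (hammingDist c d : ℤ) = 2 * q ^ 2 + q := by
      rcases hw with h | h | h
      · left; rw [h, Nat.cast_sub hkm]; push_cast; rw [h2m, ← hq]
      · right; left; rw [h]; push_cast; rw [h2m]
      · right; right; rw [h]; push_cast; rw [h2m, ← hq]
    have hs' := hs_dist c d
    rcases hcast with h | h | h <;> rw [hs', h, hnZ] <;> ring
  -- diagonal sum value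
  have hdiag : ∑ c ∈ Y, ∑ d ∈ Y,
      ((s c d) ^ 3 + 6 * (s c d) ^ 2 + (12 - 4 * q ^ 2) * (s c d) + (8 - 8 * q ^ 2))
      = B * (64 * q ^ 6 - 16 * q ^ 4) := by
    have h1 : ∀ c ∈ Y, ∑ d ∈ Y,
        ((s c d) ^ 3 + 6 * (s c d) ^ 2 + (12 - 4 * q ^ 2) * (s c d) + (8 - 8 * q ^ 2))
        = 64 * q ^ 6 - 16 * q ^ 4 := by
      intro c hc
      rw [Finset.sum_eq_single_of_mem c hc (fun d hd hne => hzero c hc d hd hne)]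
      rw [hs_self, hnZ]; ring
    rw [Finset.sum_congr rfl h1, Finset.sum_const, nsmul_eq_mul, hB]
  -- expand into moments
  have hsplit : ∑ c ∈ Y, ∑ d ∈ Y,
      ((s c d) ^ 3 + 6 * (s c d) ^ 2 + (12 - 4 * q ^ 2) * (s c d) + (8 - 8 * q ^ 2))
      = (∑ c ∈ Y, ∑ d ∈ Y, (s c d) ^ 3) + 6 * (∑ c ∈ Y, ∑ d ∈ Y, (s c d) ^ 2)
        + (12 - 4 * q ^ 2) * (∑ c ∈ Y, ∑ d ∈ Y, s c d) + (8 - 8 * q ^ 2) * (B * B) := by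
    simp only [Finset.sum_add_distrib, ← Finset.mul_sum, Finset.sum_const, nsmul_eq_mul, hB]
    ring
  have hA : (∑ c ∈ Y, ∑ d ∈ Y, (s c d) ^ 3) + 6 * (∑ c ∈ Y, ∑ d ∈ Y, (s c d) ^ 2)
      + (12 - 4 * q ^ 2) * M1 + (8 - 8 * q ^ 2) * (B * B)
      = B * (64 * q ^ 6 - 16 * q ^ 4) := by
    rw [← hP1, ← hsplit, hdiag]
  clear_value ε s S M1 B q
  -- main inequality
  have key : B ≤ 4 * q ^ 4 := by
    have hB2 : (4 * q ^ 2 - 2) * B ^ 2 ≤ ∑ c ∈ Y, ∑ d ∈ Y, (s c d) ^ 2 := by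
      rw [← hnZ]; exact hI2
    have hB3 : (4 * q ^ 2 - 2) * M1 ≤ ∑ c ∈ Y, ∑ d ∈ Y, (s c d) ^ 3 := by
      rw [← hnZ]; exact hI3
    have c1 : (4 * q ^ 2 - 2) * M1 + 6 * ((4 * q ^ 2 - 2) * B ^ 2)
        + (12 - 4 * q ^ 2) * M1 + (8 - 8 * q ^ 2) * (B * B)
        ≤ B * (64 * q ^ 6 - 16 * q ^ 4) := by
      rw [← hA]
      have h6 : 6 * ((4 * q ^ 2 - 2) * B ^ 2) ≤ 6 * (∑ c ∈ Y, ∑ d ∈ Y, (s c d) ^ 2) :=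
        mul_le_mul_of_nonneg_left hB2 (by norm_num)
      exact add_le_add (add_le_add (add_le_add hB3 h6) le_rfl) le_rfl
    have c2 : 10 * M1 + (16 * q ^ 2 - 4) * B ^ 2 ≤ B * (64 * q ^ 6 - 16 * q ^ 4) := by
      calc 10 * M1 + (16 * q ^ 2 - 4) * B ^ 2
          = (4 * q ^ 2 - 2) * M1 + 6 * ((4 * q ^ 2 - 2) * B ^ 2)
            + (12 - 4 * q ^ 2) * M1 + (8 - 8 * q ^ 2) * (B * B) := by ring
        _ ≤ B * (64 * q ^ 6 - 16 * q ^ 4) := c1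
    have hcoef : (0:ℤ) < 16 * q ^ 2 - 4 := by nlinarith [hq1]
    have c3 : (16 * q ^ 2 - 4) * B ^ 2 ≤ (16 * q ^ 2 - 4) * (4 * q ^ 4 * B) := by
      calc (16 * q ^ 2 - 4) * B ^ 2 ≤ 10 * M1 + (16 * q ^ 2 - 4) * B ^ 2 := by linarith
        _ ≤ B * (64 * q ^ 6 - 16 * q ^ 4) := c2
        _ = (16 * q ^ 2 - 4) * (4 * q ^ 4 * B) := by ring
    have c4 : B ^ 2 ≤ 4 * q ^ 4 * B := le_of_mul_le_mul_left c3 hcoef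
    rcases hB0.eq_or_lt with h | h
    · rw [← h]; positivity
    · have c5 : B * B ≤ 4 * q ^ 4 * B := by rw [← sq]; exact c4
      exact le_of_mul_le_mul_right c5 h
  -- conclude
  have h4q : (4 * q ^ 4 : ℤ) = ((2 ^ (2 * m) : ℕ) : ℤ) := by
    rw [hq]
    push_cast
    rw [← pow_mul, (by omega : 2 * m = k * 4 + 2), pow_add, pow_mul]
    ring
  have hcard : Y.card ≤ 2 ^ (2 * m) := by
    have h5 : (Y.card : ℤ) ≤ ((2 ^ (2 * m) : ℕ) : ℤ) := by rw [← h4q, ← hB]; exact key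
    exact_mod_cast h5
  have hgoal : (2 ^ (m + 1)) ^ 2 / 4 = 2 ^ (2 * m) := by
    rw [← pow_mul, (by ring : (m + 1) * 2 = 2 * m + 2), pow_add]
    norm_num
  rw [hgoal]
  exact hcard
end

section
/- Let Y be a binary code of length N−1 (with N = 2^{m+1}, m odd) whose distinct codewords have pairwise Hamming distances only in {2^m − 2^{(m−1)/2}, 2^m, 2^m + 2^{(m−1)/2}}. Then |Y| ≤ N²/2. -/
open Finset

lemma sum_sq_form {ι κ : Type*} (D : Finset κ) (q : κ → ι → ℤ) (Y : Finset ι) :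
    ∑ c ∈ Y, ∑ d ∈ Y, ∑ t ∈ D, q t c * q t d = ∑ t ∈ D, (∑ c ∈ Y, q t c) ^ 2 := by
  have h1 : ∀ t, (∑ c ∈ Y, q t c) ^ 2 = ∑ c ∈ Y, ∑ d ∈ Y, q t c * q t d := by
    intro t; rw [sq, Finset.sum_mul_sum]
  calc ∑ c ∈ Y, ∑ d ∈ Y, ∑ t ∈ D, q t c * q t d
      = ∑ c ∈ Y, ∑ t ∈ D, ∑ d ∈ Y, q t c * q t d :=
        Finset.sum_congr rfl fun c _ => Finset.sum_comm
    _ = ∑ t ∈ D, ∑ c ∈ Y, ∑ d ∈ Y, q t c * q t d := Finset.sum_comm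
    _ = ∑ t ∈ D, (∑ c ∈ Y, q t c) ^ 2 := by simp only [h1]

lemma sum_offDiag_f {ι : Type*} [Fintype ι] [DecidableEq ι] (f : ι → ℤ) (hf : ∀ i, f i * f i = 1) :
    ∑ t ∈ Finset.univ.offDiag, f t.1 * f t.2 = (∑ i, f i) ^ 2 - (Fintype.card ι : ℤ) := by
  have h : ∑ t ∈ (Finset.univ : Finset ι) ×ˢ Finset.univ, f t.1 * f t.2
      = ∑ t ∈ (Finset.univ : Finset ι).diag, f t.1 * f t.2
        + ∑ t ∈ (Finset.univ : Finset ι).offDiag, f t.1 * f t.2 := by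
    rw [← Finset.diag_union_offDiag, Finset.sum_union (Finset.disjoint_diag_offDiag _)]
  have h2 : ∑ t ∈ (Finset.univ : Finset ι) ×ˢ Finset.univ, f t.1 * f t.2 = (∑ i, f i) ^ 2 := by
    rw [Finset.sum_product, sq, Finset.sum_mul_sum]
  have h3 : ∑ t ∈ (Finset.univ : Finset ι).diag, f t.1 * f t.2 = (Fintype.card ι : ℤ) := by
    rw [Finset.sum_diag]
    simp [hf, Finset.card_univ]
  omega

lemma sum_D3_f {ι : Type*} [Fintype ι] [DecidableEq ι] (f : ι → ℤ) (hf : ∀ i, f i * f i = 1) :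
    ∑ t ∈ (Finset.univ.filter fun t : ι × ι × ι => t.1 ≠ t.2.1 ∧ t.1 ≠ t.2.2 ∧ t.2.1 ≠ t.2.2),
        f t.1 * f t.2.1 * f t.2.2
      = (∑ i, f i) ^ 3 - 3 * (Fintype.card ι : ℤ) * (∑ i, f i) + 2 * (∑ i, f i) := by
  classical
  set p : ℤ := ∑ i, f i with hp
  set n : ℤ := (Fintype.card ι : ℤ) with hn
  have cube : ∑ i, ∑ j, ∑ l, f i * f j * f l = p ^ 3 := by
    have : p ^ 3 = (p * p) * p := by ring
    rw [this, Finset.sum_mul_sum, Finset.sum_mul]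
    refine Finset.sum_congr rfl fun i _ => ?_
    rw [Finset.sum_mul]
    refine Finset.sum_congr rfl fun j _ => ?_
    rw [Finset.mul_sum]
  have hB1 : ∑ i, ∑ j, ∑ l : ι, (if i = j then f i * f j * f l else 0) = n * p := by
    have : ∀ i : ι, ∑ j, ∑ l : ι, (if i = j then f i * f j * f l else 0)
        = ∑ l : ι, f i * f i * f l := by
      intro i
      rw [Finset.sum_comm]
      refine Finset.sum_congr rfl fun l _ => ?_
      simp
    simp only [this, hf, one_mul]
    simp only [Finset.sum_const, Finset.card_univ, nsmul_eq_mul, ← Finset.mul_sum]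
    rfl
  have hB2 : ∑ i, ∑ j, ∑ l : ι, (if i = l then f i * f j * f l else 0) = n * p := by
    have : ∀ (i j : ι), ∑ l : ι, (if i = l then f i * f j * f l else 0) = f j := by
      intro i j
      rw [Finset.sum_ite_eq]
      simp [mul_right_comm, hf]
    simp only [this]
    simp only [Finset.sum_const, Finset.card_univ, nsmul_eq_mul, ← Finset.mul_sum]
    rfl
  have hB3 : ∑ i, ∑ j, ∑ l : ι, (if j = l then f i * f j * f l else 0) = n * p := by
    have : ∀ (i j : ι), ∑ l : ι, (if j = l then f i * f j * f l else 0) = f i := by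
      intro i j
      rw [Finset.sum_ite_eq]
      simp [mul_assoc, hf]
    simp only [this]
    simp only [Finset.sum_const, Finset.card_univ, nsmul_eq_mul, ← Finset.sum_mul, ← Finset.mul_sum]
    rfl
  have hB4 : ∑ i, ∑ j, ∑ l : ι, (if i = j then (if j = l then f i * f j * f l else 0) else 0)
      = p := by
    have : ∀ (i j : ι), ∑ l : ι, (if i = j then (if j = l then f i * f j * f l else 0) else 0)
        = if i = j then f i * f j * f j else 0 := by
      intro i j
      by_cases h : i = j <;> simp [h, Finset.sum_ite_eq]
    simp only [this]
    have : ∀ i : ι, ∑ j, (if i = j then f i * f j * f j else 0) = f i := by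
      intro i
      rw [Finset.sum_ite_eq]
      simp [mul_assoc, hf]
    simp only [this]
    rfl
  have point : ∀ t : ι × ι × ι,
      (if t.1 ≠ t.2.1 ∧ t.1 ≠ t.2.2 ∧ t.2.1 ≠ t.2.2 then f t.1 * f t.2.1 * f t.2.2 else 0)
      = f t.1 * f t.2.1 * f t.2.2
        - (if t.1 = t.2.1 then f t.1 * f t.2.1 * f t.2.2 else 0)
        - (if t.1 = t.2.2 then f t.1 * f t.2.1 * f t.2.2 else 0)
        - (if t.2.1 = t.2.2 then f t.1 * f t.2.1 * f t.2.2 else 0)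
        + 2 * (if t.1 = t.2.1 then (if t.2.1 = t.2.2 then f t.1 * f t.2.1 * f t.2.2 else 0) else 0) := by
    rintro ⟨i, j, l⟩
    by_cases h1 : i = j <;> by_cases h2 : i = l <;> by_cases h3 : j = l <;> simp_all <;> ring
  rw [Finset.sum_filter]
  simp only [point]
  simp only [Finset.sum_add_distrib, Finset.sum_sub_distrib, ← Finset.mul_sum]
  simp only [Fintype.sum_prod_type]
  rw [cube, hB1, hB2, hB3, hB4]
  ring

def sg (a : ZMod 2) : ℤ := if a = 0 then 1 else -1

lemma sg_mul_self (a : ZMod 2) : sg a * sg a = 1 := by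
  unfold sg; split <;> norm_num

lemma sg_eq (a b : ZMod 2) : sg a * sg b = if a = b then 1 else -1 := by
  revert a b; decide

lemma sum_sg_eq {ι : Type*} [Fintype ι] [DecidableEq ι] (c d : ι → ZMod 2) :
    ∑ i, sg (c i) * sg (d i) = (Fintype.card ι : ℤ) - 2 * (hammingDist c d : ℤ) := by
  have h : ∀ i, sg (c i) * sg (d i) = 1 - 2 * (if c i ≠ d i then (1:ℤ) else 0) := by
    intro i
    rw [sg_eq]
    by_cases h : c i = d i <;> simp [h]
  simp only [h]
  rw [Finset.sum_sub_distrib, ← Finset.mul_sum, Finset.sum_boole]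
  simp [hammingDist, Finset.card_univ]


/-- A binary code of length N−1 (N = 2^{m+1}, m odd) with pairwise distances
in {2^m − 2^{(m−1)/2}, 2^m, 2^m + 2^{(m−1)/2}} has at most N²/2 codewords. -/
theorem stmt_15 (m : ℕ) (hm : Odd m)
    (Y : Finset (Fin (2 ^ (m + 1) - 1) → ZMod 2))
    (hdist : ∀ c ∈ Y, ∀ d ∈ Y, c ≠ d →
      hammingDist c d ∈
        ({2 ^ m - 2 ^ ((m - 1) / 2), 2 ^ m, 2 ^ m + 2 ^ ((m - 1) / 2)} : Set ℕ)) :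
    Y.card ≤ (2 ^ (m + 1)) ^ 2 / 2 := by
  classical
  obtain ⟨u, hu⟩ := hm
  obtain ⟨N, hN⟩ : ∃ N : ℤ, N = 2 ^ (m + 1) := ⟨_, rfl⟩
  have hcard : (Fintype.card (Fin (2 ^ (m + 1) - 1)) : ℤ) = N - 1 := by
    rw [hN]
    simp
  -- the three square-kernels
  set q3 : ((Fin (2 ^ (m + 1) - 1)) × (Fin (2 ^ (m + 1) - 1)) × (Fin (2 ^ (m + 1) - 1))) → (Fin (2 ^ (m + 1) - 1) → ZMod 2) → ℤ :=
    fun t c => sg (c t.1) * sg (c t.2.1) * sg (c t.2.2) with hq3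
  set q2 : ((Fin (2 ^ (m + 1) - 1)) × (Fin (2 ^ (m + 1) - 1))) → (Fin (2 ^ (m + 1) - 1) → ZMod 2) → ℤ := fun t c => sg (c t.1) * sg (c t.2) with hq2
  set q1 : Fin (2 ^ (m + 1) - 1) → (Fin (2 ^ (m + 1) - 1) → ZMod 2) → ℤ := fun i c => sg (c i) with hq1
  set D3 : Finset ((Fin (2 ^ (m + 1) - 1)) × (Fin (2 ^ (m + 1) - 1)) × (Fin (2 ^ (m + 1) - 1))) :=
    Finset.univ.filter fun t : (Fin (2 ^ (m + 1) - 1)) × (Fin (2 ^ (m + 1) - 1)) × (Fin (2 ^ (m + 1) - 1)) => t.1 ≠ t.2.1 ∧ t.1 ≠ t.2.2 ∧ t.2.1 ≠ t.2.2 with hD3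
  set E : (Fin (2 ^ (m + 1) - 1) → ZMod 2) → (Fin (2 ^ (m + 1) - 1) → ZMod 2) → ℤ := fun c d =>
    (∑ t ∈ D3, q3 t c * q3 t d) + 3 * (∑ t ∈ Finset.univ.offDiag, q2 t c * q2 t d)
      + (2 * N - 2) * (∑ i, q1 i c * q1 i d) + (2 * N - 2) with hE
  -- positivity
  have hN2 : (2:ℤ) ≤ N := by
    rw [hN]
    calc (2:ℤ) = 2 ^ 1 := by norm_num
    _ ≤ 2 ^ (m+1) := by
        apply pow_le_pow_right₀ (by norm_num)
        omega
  have hpos : (2 * N - 2) * (Y.card : ℤ) ^ 2 ≤ ∑ c ∈ Y, ∑ d ∈ Y, E c d := by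
    have e3 := sum_sq_form D3 q3 Y
    have e2 := sum_sq_form (Finset.univ.offDiag) q2 Y
    have e1 := sum_sq_form (Finset.univ : Finset (Fin (2 ^ (m + 1) - 1))) q1 Y
    have split : ∑ c ∈ Y, ∑ d ∈ Y, E c d
        = (∑ c ∈ Y, ∑ d ∈ Y, ∑ t ∈ D3, q3 t c * q3 t d)
          + 3 * (∑ c ∈ Y, ∑ d ∈ Y, ∑ t ∈ Finset.univ.offDiag, q2 t c * q2 t d)
          + (2 * N - 2) * (∑ c ∈ Y, ∑ d ∈ Y, ∑ i, q1 i c * q1 i d)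
          + (2 * N - 2) * (Y.card : ℤ) ^ 2 := by
      simp only [hE, Finset.sum_add_distrib, ← Finset.mul_sum, Finset.sum_const,
        nsmul_eq_mul]
      ring
    rw [split, e3, e2, e1]
    have p3 : (0:ℤ) ≤ ∑ t ∈ D3, (∑ c ∈ Y, q3 t c) ^ 2 :=
      Finset.sum_nonneg fun t _ => sq_nonneg _
    have p2 : (0:ℤ) ≤ ∑ t ∈ Finset.univ.offDiag, (∑ c ∈ Y, q2 t c) ^ 2 :=
      Finset.sum_nonneg fun t _ => sq_nonneg _
    have p1 : (0:ℤ) ≤ ∑ t ∈ (Finset.univ : Finset (Fin (2 ^ (m + 1) - 1))), (∑ c ∈ Y, q1 t c) ^ 2 :=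
      Finset.sum_nonneg fun t _ => sq_nonneg _
    nlinarith [p3, p2, p1, hN2]
  -- pointwise value
  have hval : ∀ c d : Fin (2 ^ (m + 1) - 1) → ZMod 2,
      E c d = ((Fintype.card (Fin (2 ^ (m + 1) - 1)) : ℤ) - 2 * (hammingDist c d : ℤ) + 1) ^ 3
        - N * ((Fintype.card (Fin (2 ^ (m + 1) - 1)) : ℤ) - 2 * (hammingDist c d : ℤ) + 1) := by
    intro c d
    set f : Fin (2 ^ (m + 1) - 1) → ℤ := fun i => sg (c i) * sg (d i) with hfdef
    have hf : ∀ i, f i * f i = 1 := by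
      intro i
      simp only [hfdef]
      rw [mul_mul_mul_comm, sg_mul_self, sg_mul_self, one_mul]
    have t3 : ∑ t ∈ D3, q3 t c * q3 t d = ∑ t ∈ D3, f t.1 * f t.2.1 * f t.2.2 :=
      Finset.sum_congr rfl fun t _ => by simp only [hq3, hfdef]; ring
    have t2 : ∑ t ∈ Finset.univ.offDiag, q2 t c * q2 t d
        = ∑ t ∈ Finset.univ.offDiag, f t.1 * f t.2 :=
      Finset.sum_congr rfl fun t _ => by simp only [hq2, hfdef]; ring
    have t1 : ∑ i, q1 i c * q1 i d = ∑ i, f i :=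
      Finset.sum_congr rfl fun i _ => by simp only [hq1, hfdef]
    have hsum : ∑ i, f i = (Fintype.card (Fin (2 ^ (m + 1) - 1)) : ℤ) - 2 * (hammingDist c d : ℤ) := sum_sg_eq c d
    simp only [hE, hD3]
    rw [t3, t2, t1, sum_D3_f f hf, sum_offDiag_f f hf, hsum, hcard]
    ring
  -- value on the code
  have hu2 : (m - 1) / 2 = u := by omega
  have hmu : m = 2 * u + 1 := by omega
  have h2m : ((2:ℤ)) ^ m = 2 * (2 ^ u) ^ 2 := by
    rw [hmu, show 2 * u + 1 = u + u + 1 by ring, pow_add, pow_add]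
    ring
  have hN4 : N = 4 * (2 ^ u) ^ 2 := by
    rw [hN, show m + 1 = u + u + 2 by omega, pow_add, pow_add]
    ring
  have hcode : ∀ c ∈ Y, ∀ d ∈ Y, E c d = if c = d then N ^ 2 * (N - 1) else 0 := by
    intro c hc d hd
    by_cases hcd : c = d
    · subst hcd
      rw [if_pos rfl, hval c c, hammingDist_self, hcard]
      push_cast
      ring
    · simp only [hcd, if_false]
      rw [hval c d, hcard]
      have hx := hdist c hc d hd hcd
      simp only [hu2, Set.mem_insert_iff, Set.mem_singleton_iff] at hx
      have hle : (2:ℕ) ^ u ≤ 2 ^ m := Nat.pow_le_pow_right (by norm_num) (by omega)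
      rcases hx with hx | hx | hx
      · have hxz : (hammingDist c d : ℤ) = 2 * (2 ^ u) ^ 2 - 2 ^ u := by
          rw [hx]
          push_cast [Nat.cast_sub hle]
          rw [h2m]
        rw [hxz, hN4]
        ring
      · have hxz : (hammingDist c d : ℤ) = 2 * (2 ^ u) ^ 2 := by
          rw [hx]; push_cast; rw [h2m]
        rw [hxz, hN4]
        ring
      · have hxz : (hammingDist c d : ℤ) = 2 * (2 ^ u) ^ 2 + 2 ^ u := by
          rw [hx]; push_cast; rw [h2m]
        rw [hxz, hN4]
        ring
  have htot : ∑ c ∈ Y, ∑ d ∈ Y, E c d = (Y.card : ℤ) * (N ^ 2 * (N - 1)) := by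
    rw [Finset.sum_congr rfl fun c hc =>
      Finset.sum_congr rfl fun d hd => hcode c hc d hd]
    rw [Finset.sum_congr rfl fun c hc => Finset.sum_ite_eq Y c fun _ => N ^ 2 * (N - 1)]
    rw [Finset.sum_congr rfl fun c hc => if_pos hc]
    rw [Finset.sum_const, nsmul_eq_mul]
  -- conclude
  rw [htot] at hpos
  have hk0 : (0:ℤ) ≤ (Y.card : ℤ) := Int.natCast_nonneg _
  rcases eq_or_lt_of_le hk0 with hk1 | hk1
  · have hY0 : Y.card = 0 := by exact_mod_cast hk1.symm
    simp [hY0]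
  · have hNk : 0 < (N - 1) * (Y.card : ℤ) := mul_pos (by linarith) hk1
    have h2 : 2 * (Y.card : ℤ) * ((N - 1) * (Y.card : ℤ))
        ≤ N ^ 2 * ((N - 1) * (Y.card : ℤ)) := by nlinarith [hpos]
    have h3 : 2 * (Y.card : ℤ) ≤ N ^ 2 := le_of_mul_le_mul_right h2 hNk
    have h4 : 2 * Y.card ≤ (2 ^ (m + 1)) ^ 2 := by
      rw [hN] at h3
      exact_mod_cast h3
    rw [Nat.le_div_iff_mul_le (by norm_num : 0 < 2)]
    omega
end

section
/- Let L be the set of N² vectors in ℝ^N of the form ((−1)^{c_v}/√N)_v arising from a Kerdock-like code C of length N with N² codewords and nonzero distances (N±√N)/2, N/2, N, where C is a union of N/2 cosets of pairwise 'orthogonal-basis' type (each coset of size 2N giving an orthonormal basis together with negatives). Fix two coordinates i ≠ j and let Y' = {x ∈ L : x_i = x_j = 1/√N}. Then |Y'| = N²/4, and after deleting coordinates i, j the resulting vectors in ℝ^{N−2} have pairwise inner products only in {(−√N−2)/N, −2/N, (√N−2)/N}. -/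
open Finset

lemma zmod2_cases (x : ZMod 2) : x = 0 ∨ x = 1 := by fin_cases x <;> [left; right] <;> rfl

lemma neg_one_pow_val (x y : ZMod 2) :
    ((-1:ℝ))^x.val * (-1:ℝ)^y.val = if x = y then 1 else -1 := by
  rcases zmod2_cases x with hx|hx <;> rcases zmod2_cases y with hy|hy <;>
    subst hx <;> subst hy <;> norm_num [ZMod.val_one]

lemma sum_f_mul (N : ℕ) (hN : 0 < N) (c d : Fin N → ZMod 2) :
    ∑ v, ((-1:ℝ)^((c v).val)/Real.sqrt N) * ((-1:ℝ)^((d v).val)/Real.sqrt N)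
      = ((N:ℝ) - 2 * hammingDist c d) / N := by
  have hs : Real.sqrt N * Real.sqrt N = N := Real.mul_self_sqrt (by positivity)
  have hterm : ∀ v, ((-1:ℝ)^((c v).val)/Real.sqrt N) * ((-1:ℝ)^((d v).val)/Real.sqrt N)
      = (if c v = d v then (1:ℝ) else -1) / N := by
    intro v
    rw [div_mul_div_comm, hs, neg_one_pow_val]
  simp_rw [hterm]
  rw [← Finset.sum_div]
  congr 1
  have h2 : ∀ v : Fin N, (if c v = d v then (1:ℝ) else -1)
      = 1 - 2 * (if c v ≠ d v then (1:ℝ) else 0) := by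
    intro v; by_cases h : c v = d v <;> simp [h] <;> norm_num
  simp_rw [h2]
  rw [Finset.sum_sub_distrib, ← Finset.mul_sum, Finset.sum_boole]
  simp [hammingDist]

lemma eq_compl_of_dist (N : ℕ) (c d : Fin N → ZMod 2) (h : hammingDist c d = N) :
    d = c + fun _ => 1 := by
  have h1 : ({v | c v ≠ d v} : Finset (Fin N)) = univ :=
    Finset.eq_univ_of_card _ (by simpa [hammingDist] using h)
  funext v
  have hv : c v ≠ d v := by
    have := Finset.mem_univ v
    rw [← h1, Finset.mem_filter] at this
    exact this.2
  rcases zmod2_cases (c v) with h0|h0 <;> rcases zmod2_cases (d v) with h0'|h0' <;>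
    simp_all [Pi.add_apply] <;> decide

lemma dist_compl (N : ℕ) (c : Fin N → ZMod 2) :
    hammingDist c ((c + fun _ => 1 : Fin N → ZMod 2)) = N := by
  have h : ∀ v, c v ≠ (c + fun _ => 1 : Fin N → ZMod 2) v := by
    intro v
    simp only [Pi.add_apply]
    rcases zmod2_cases (c v) with h0|h0 <;> rw [h0] <;> decide
  simp [hammingDist, Finset.filter_eq_self.mpr (fun v _ => h v)]

lemma compl_compl' (N : ℕ) (c : Fin N → ZMod 2) :
    ((c + fun _ => 1) + fun _ => 1 : Fin N → ZMod 2) = c := by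
  funext v
  simp only [Pi.add_apply]
  rcases zmod2_cases (c v) with h0|h0 <;> rw [h0] <;> decide

lemma zmod2_ne_zero {x : ZMod 2} (h : ¬ x = 0) : x = 1 := by
  rcases zmod2_cases x with h0|h0 <;> simp_all

lemma zmod2_add_one_ne {x : ZMod 2} (h : x = 0) : x + 1 ≠ 0 := by subst h; decide

lemma block_count (N : ℕ) (hN : 0 < N) (heven : 2 ∣ N) (i j : Fin N) (hij : i ≠ j)
    (T : Finset (Fin N → ZMod 2)) (hTcard : T.card = 2 * N)
    (hTneg : ∀ c ∈ T, (c + fun _ => (1 : ZMod 2)) ∈ T)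
    (hTorth : ∀ c ∈ T, ∀ d ∈ T, c ≠ d → hammingDist c d = N / 2 ∨ hammingDist c d = N) :
    (T.filter fun c => c i = 0 ∧ c j = 0).card = N / 2 := by
  obtain ⟨m, hm⟩ := heven
  set z : Fin N := ⟨0, hN⟩ with hz
  set S : Finset (Fin N → ZMod 2) := T.filter (fun c => c z = 0) with hS
  -- S has cardinality N
  have hcard2 : S.card + (T.filter (fun c => ¬ c z = 0)).card = 2 * N := by
    rw [hS, Finset.card_filter_add_card_filter_not, hTcard]
  have hSS' : S.card = (T.filter (fun c => ¬ c z = 0)).card := by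
    refine Finset.card_bij' (fun c _ => c + fun _ => 1) (fun c _ => c + fun _ => 1)
      ?_ ?_ ?_ ?_
    · intro c hc
      rw [hS, Finset.mem_filter] at hc
      rw [Finset.mem_filter]
      exact ⟨hTneg c hc.1, zmod2_add_one_ne hc.2⟩
    · intro c hc
      rw [Finset.mem_filter] at hc
      rw [hS, Finset.mem_filter]
      refine ⟨hTneg c hc.1, ?_⟩
      have h1 := zmod2_ne_zero hc.2
      show c z + 1 = 0
      rw [h1]; decide
    · intro c _; exact compl_compl' N c
    · intro c _; exact compl_compl' N c
  have hScard : S.card = N := by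
    generalize hq : (T.filter (fun c => ¬ c z = 0)).card = q at hcard2 hSS'
    generalize hp : S.card = p at hcard2 hSS' ⊢
    clear hq hp
    omega
  have hNr : (N:ℝ) ≠ 0 := Nat.cast_ne_zero.mpr hN.ne'
  set M : Matrix S (Fin N) ℝ :=
    fun s v => (-1:ℝ)^(((s : Fin N → ZMod 2)) v).val / Real.sqrt N with hM
  have hMM : M * M.transpose = 1 := by
    ext a b
    rw [Matrix.mul_apply]
    simp only [Matrix.transpose_apply]
    simp only [hM]
    rw [sum_f_mul N hN]
    by_cases hab : a = b
    · subst hab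
      rw [hammingDist_self, Matrix.one_apply_eq]
      push_cast
      field_simp
      ring
    · have hab' : (a : Fin N → ZMod 2) ≠ (b : Fin N → ZMod 2) := fun h => hab (Subtype.ext h)
      have haT : (a : Fin N → ZMod 2) ∈ T := (Finset.mem_filter.mp a.2).1
      have hbT : (b : Fin N → ZMod 2) ∈ T := (Finset.mem_filter.mp b.2).1
      have haz : (a : Fin N → ZMod 2) z = 0 := (Finset.mem_filter.mp a.2).2
      have hbz : (b : Fin N → ZMod 2) z = 0 := (Finset.mem_filter.mp b.2).2
      rcases hTorth _ haT _ hbT hab' with hd | hd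
      · rw [hd, Matrix.one_apply_ne hab, div_eq_zero_iff]
        left
        have h5 : N / 2 = m := by
          rw [hm, Nat.mul_div_cancel_left m (by norm_num : 0 < 2)]
        rw [h5, hm]
        push_cast
        ring
      · exfalso
        have h6 := eq_compl_of_dist N _ _ hd
        rw [h6] at hbz
        exact zmod2_add_one_ne haz hbz
  have hMtM : M.transpose * M = 1 :=
    (Matrix.mul_eq_one_comm_of_equiv (S.equivFinOfCardEq hScard)).mp hMM
  have key : ∑ c ∈ S, (if c i = c j then (1:ℝ) else -1) = 0 := by
    have h1 : (M.transpose * M) i j = 0 := by rw [hMtM]; exact Matrix.one_apply_ne hij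
    rw [Matrix.mul_apply] at h1
    simp only [Matrix.transpose_apply] at h1
    simp only [hM] at h1
    have h2 : ∀ x : {c // c ∈ S},
        (-1:ℝ)^((x.1 i).val)/Real.sqrt N * ((-1:ℝ)^((x.1 j).val)/Real.sqrt N)
          = (if x.1 i = x.1 j then (1:ℝ) else -1)/N := fun x => by
      rw [div_mul_div_comm, Real.mul_self_sqrt (by positivity), neg_one_pow_val]
    simp only [h2] at h1
    rw [Finset.sum_coe_sort S (fun c => (if c i = c j then (1:ℝ) else -1)/(N:ℝ))] at h1
    rw [← Finset.sum_div, div_eq_zero_iff] at h1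
    tauto
  have hEF : (S.filter fun c => c i = c j).card + (S.filter fun c => ¬ c i = c j).card = N := by
    rw [Finset.card_filter_add_card_filter_not, hScard]
  have hkey2 : ((S.filter fun c => c i = c j).card : ℝ)
      - ((S.filter fun c => ¬ c i = c j).card : ℝ) = 0 := by
    rw [← key, Finset.sum_ite, Finset.sum_const, Finset.sum_const]
    simp [mul_comm, sub_eq_add_neg]
  have hE : (S.filter fun c => c i = c j).card = m := by
    have h3 : (S.filter fun c => c i = c j).card = (S.filter fun c => ¬ c i = c j).card :=
      Nat.cast_injective (by linarith :
        (((S.filter fun c => c i = c j).card : ℕ) : ℝ)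
          = (((S.filter fun c => ¬ c i = c j).card : ℕ) : ℝ))
    generalize ha : (S.filter fun c => c i = c j).card = a at hEF h3 ⊢
    generalize hb : (S.filter fun c => ¬ c i = c j).card = b at hEF h3
    clear ha hb hcard2 hSS' hkey2 key
    omega
  have hfinal : (T.filter fun c => c i = 0 ∧ c j = 0).card
      = (S.filter fun c => c i = c j).card := by
    refine Finset.card_bij' (fun c _ => if c z = 0 then c else c + fun _ => 1)
      (fun c _ => if c i = 0 then c else c + fun _ => 1) ?_ ?_ ?_ ?_
    · intro c hc
      rw [Finset.mem_filter] at hc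
      obtain ⟨hcT, hci, hcj⟩ := hc
      by_cases hcz : c z = 0
      · rw [if_pos hcz, Finset.mem_filter, hS, Finset.mem_filter]
        exact ⟨⟨hcT, hcz⟩, by rw [hci, hcj]⟩
      · rw [if_neg hcz, Finset.mem_filter, hS, Finset.mem_filter]
        have h1 := zmod2_ne_zero hcz
        refine ⟨⟨hTneg c hcT, ?_⟩, ?_⟩
        · show c z + 1 = 0
          rw [h1]; decide
        · show c i + 1 = c j + 1
          rw [hci, hcj]
    · intro c hc
      rw [Finset.mem_filter, hS, Finset.mem_filter] at hc
      obtain ⟨⟨hcT, hcz⟩, hcij⟩ := hc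
      by_cases hci : c i = 0
      · rw [if_pos hci, Finset.mem_filter]
        exact ⟨hcT, hci, by rw [← hcij, hci]⟩
      · rw [if_neg hci, Finset.mem_filter]
        have h1 := zmod2_ne_zero hci
        refine ⟨hTneg c hcT, ?_, ?_⟩
        · show c i + 1 = 0
          rw [h1]; decide
        · show c j + 1 = 0
          rw [← hcij, h1]; decide
    · intro c hc
      rw [Finset.mem_filter] at hc
      by_cases hcz : c z = 0
      · simp only [if_pos hcz, if_pos hc.2.1]
      · rw [if_neg hcz]
        have h1 : ((c + fun _ => 1 : Fin N → ZMod 2)) i ≠ 0 := zmod2_add_one_ne hc.2.1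
        rw [if_neg h1, compl_compl']
    · intro c hc
      rw [Finset.mem_filter, hS, Finset.mem_filter] at hc
      by_cases hci : c i = 0
      · simp only [if_pos hci, if_pos hc.1.2]
      · rw [if_neg hci]
        have h1 : ((c + fun _ => 1 : Fin N → ZMod 2)) z ≠ 0 := zmod2_add_one_ne hc.1.2
        rw [if_neg h1, compl_compl']
  rw [hfinal, hE, hm, Nat.mul_div_cancel_left m (by norm_num : 0 < 2)]

/-- From a Kerdock-like code C of length N with N² codewords (a disjoint
union of N/2 subsets of size 2N, each giving an orthonormal basis together with its
negatives), the N²/4 vectors of the associated line-set L having entries +1/√N at two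
fixed coordinates i ≠ j, after deleting those coordinates, have pairwise inner products
in {(−√N−2)/N, −2/N, (√N−2)/N}. -/
theorem stmt_19 (N : ℕ) (hN : 0 < N) (C : Finset (Fin N → ZMod 2))
    (hcard : C.card = N ^ 2)
    (hdist : ∀ c ∈ C, ∀ d ∈ C, c ≠ d →
      (hammingDist c d : ℝ) ∈
        ({(N - Real.sqrt N) / 2, (N + Real.sqrt N) / 2, (N : ℝ) / 2, (N : ℝ)} : Set ℝ))
    (B : Fin (N / 2) → Finset (Fin N → ZMod 2))
    (hBsub : ∀ k, B k ⊆ C)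
    (hBcover : C = Finset.univ.biUnion B)
    (hBdisj : ∀ k l, k ≠ l → Disjoint (B k) (B l))
    (hBcard : ∀ k, (B k).card = 2 * N)
    (hBneg : ∀ k, ∀ c ∈ B k, (c + fun _ => (1 : ZMod 2)) ∈ B k)
    (hBorth : ∀ k, ∀ c ∈ B k, ∀ d ∈ B k, c ≠ d →
      hammingDist c d = N / 2 ∨ hammingDist c d = N)
    (f : (Fin N → ZMod 2) → (Fin N → ℝ))
    (hf : ∀ c v, f c v = (-1 : ℝ) ^ ((c v).val) / Real.sqrt N)
    (i j : Fin N) (hij : i ≠ j)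
    (Y' : Finset (Fin N → ZMod 2))
    (hY' : Y' = C.filter fun c => c i = 0 ∧ c j = 0) :
    Y'.card = N ^ 2 / 4 ∧
      ∀ c ∈ Y', ∀ d ∈ Y', c ≠ d →
        (∑ v ∈ (Finset.univ.erase i).erase j, f c v * f d v) ∈
          ({(-Real.sqrt N - 2) / N, -2 / (N : ℝ), (Real.sqrt N - 2) / N} : Set ℝ) := by
  have hNr : (N:ℝ) ≠ 0 := Nat.cast_ne_zero.mpr hN.ne'
  have hs : Real.sqrt N * Real.sqrt N = N := Real.mul_self_sqrt (by positivity)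
  -- N/2 > 0
  have hK : 0 < N / 2 := by
    rcases Nat.eq_zero_or_pos (N / 2) with h0 | h
    · exfalso
      have hCe : C = ∅ := by
        rw [hBcover]
        ext x
        simp only [Finset.mem_biUnion, Finset.mem_univ, true_and, Finset.notMem_empty,
          iff_false, not_exists]
        intro k
        exact absurd k.2 (by omega)
      rw [hCe, Finset.card_empty] at hcard
      exact absurd hcard.symm (pow_pos hN 2).ne'
    · exact h
  have hN2 : 2 ≤ N := by omega
  -- N is even
  have heven : 2 ∣ N := by
    rcases Nat.even_or_odd N with he | ho
    · exact he.two_dvd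
    · exfalso
      obtain ⟨t, ht⟩ := ho
      set k : Fin (N / 2) := ⟨0, hK⟩ with hk
      obtain ⟨c, hc⟩ := Finset.card_pos.mp (by rw [hBcard]; omega : 0 < (B k).card)
      have hc1 : (c + fun _ => (1 : ZMod 2)) ∈ B k := hBneg k c hc
      obtain ⟨e, he⟩ : ∃ e, e ∈ ((B k).erase (c + fun _ => 1)).erase c := by
        apply Finset.card_pos.mp
        have h1 := Finset.pred_card_le_card_erase
          (s := (B k).erase (c + fun _ => 1)) (a := c)
        have h2 := Finset.pred_card_le_card_erase (s := B k) (a := (c + fun _ => 1))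
        have h3 := hBcard k
        omega
      have hec : e ≠ c := (Finset.mem_erase.mp he).1
      have hec1 : e ≠ (c + fun _ => 1) :=
        (Finset.mem_erase.mp (Finset.mem_erase.mp he).2).1
      have heB : e ∈ B k := (Finset.mem_erase.mp (Finset.mem_erase.mp he).2).2
      have hdce : hammingDist c e = N / 2 := by
        rcases hBorth k c hc e heB (Ne.symm hec) with h | h
        · exact h
        · exact absurd (eq_compl_of_dist N c e h) hec1
      have hreal := hdist c (hBsub k hc) e (hBsub k heB) (Ne.symm hec)
      rw [hdce] at hreal
      have hdiv : N / 2 = t := by omega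
      rw [hdiv] at hreal
      have hNt : (N:ℝ) = 2 * t + 1 := by rw [ht]; push_cast; ring
      have hs0 : (0:ℝ) ≤ Real.sqrt N := Real.sqrt_nonneg N
      simp only [Set.mem_insert_iff, Set.mem_singleton_iff] at hreal
      rcases hreal with h | h | h | h
      · have h1 : Real.sqrt N = 1 := by linarith
        have h2 : (N:ℝ) = 1 := by rw [h1] at hs; linarith
        rw [hNt] at h2
        have h4 : (t:ℝ) = 0 := by linarith
        have ht0 : t = 0 := Nat.cast_eq_zero.mp h4
        omega
      · linarith
      · linarith
      · have : (0:ℝ) ≤ (t:ℝ) := Nat.cast_nonneg t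
        linarith
  obtain ⟨m, hm⟩ := heven
  constructor
  · -- cardinality
    rw [hY', hBcover, Finset.filter_biUnion, Finset.card_biUnion
      (fun k _ l _ hkl => Finset.disjoint_filter_filter (hBdisj k l hkl))]
    have hbc : ∀ k : Fin (N / 2), ((B k).filter fun c => c i = 0 ∧ c j = 0).card = N / 2 :=
      fun k => block_count N hN ⟨m, hm⟩ i j hij (B k) (hBcard k) (hBneg k) (hBorth k)
    rw [Finset.sum_congr rfl (fun k _ => hbc k), Finset.sum_const, Finset.card_univ,
      Fintype.card_fin, smul_eq_mul]
    have hd2 : N / 2 = m := by omega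
    rw [hd2, hm]
    have : (2 * m) ^ 2 = 4 * (m * m) := by ring
    rw [this, Nat.mul_div_cancel_left _ (by norm_num : 0 < 4)]
  · -- inner products
    intro c hc d hd hcd
    rw [hY', Finset.mem_filter] at hc hd
    obtain ⟨hcC, hci, hcj⟩ := hc
    obtain ⟨hdC, hdi, hdj⟩ := hd
    have hsplit : ∑ v ∈ (Finset.univ.erase i).erase j, f c v * f d v
        = (∑ v, f c v * f d v) - f c i * f d i - f c j * f d j := by
      have hjm : j ∈ Finset.univ.erase i :=
        Finset.mem_erase.mpr ⟨Ne.symm hij, Finset.mem_univ j⟩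
      have h1 := Finset.sum_erase_add (Finset.univ.erase i)
        (fun v => f c v * f d v) hjm
      have h2 := Finset.sum_erase_add (Finset.univ : Finset (Fin N))
        (fun v => f c v * f d v) (Finset.mem_univ i)
      linarith
    have hfull : ∑ v, f c v * f d v = ((N:ℝ) - 2 * hammingDist c d) / N := by
      simp_rw [hf]
      exact sum_f_mul N hN c d
    have hfi : f c i * f d i = 1 / (N:ℝ) := by
      rw [hf, hf, hci, hdi, show ((0:ZMod 2)).val = 0 from rfl, pow_zero,
        div_mul_div_comm, one_mul, hs]
    have hfj : f c j * f d j = 1 / (N:ℝ) := by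
      rw [hf, hf, hcj, hdj, show ((0:ZMod 2)).val = 0 from rfl, pow_zero,
        div_mul_div_comm, one_mul, hs]
    have hne : hammingDist c d ≠ N := by
      intro h
      have h6 := eq_compl_of_dist N c d h
      rw [h6] at hdi
      exact zmod2_add_one_ne hci hdi
    have hreal := hdist c hcC d hdC hcd
    simp only [Set.mem_insert_iff, Set.mem_singleton_iff] at hreal ⊢
    rcases hreal with h | h | h | h
    · right; right
      rw [hsplit, hfull, hfi, hfj, h]
      field_simp
      ring
    · left
      rw [hsplit, hfull, hfi, hfj, h]
      field_simp
      ring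
    · right; left
      rw [hsplit, hfull, hfi, hfj, h]
      field_simp
      ring
    · exact absurd (Nat.cast_injective h) hne
end
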